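/- arXiv:2405.01595 — 10 statements merged into one kernel-verified Lean document; each statement's English description precedes it below -/
import Mathlib

section
/- Let k ≥ 1 and J ≥ 2 be integers. Let g be the affine isometry of Euclidean space ℝ^k given by g(x) = A·x + b, where A is a linear isometry (orthogonal transformation) of ℝ^k satisfying A^J = Id and b ∈ ℝ^k. Let r be a real number with 0 < r < √(2·sin(π/J)). If dist(g(x), x) < r for every point x with ‖x‖ ≤ 1/r, then A = Id, i.e. g is a translation. -/
open Finset

lemma cos_sum_dvd {J : ℕ} (hJ : 0 < J) (q : ℤ) :
    ∑ m ∈ Finset.range J, Real.cos (2 * Real.pi * m * q / J) =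
      if (J:ℤ) ∣ q then (J:ℝ) else 0 := by
  have hJ0 : (J:ℝ) ≠ 0 := Nat.cast_ne_zero.mpr hJ.ne'
  have hJ0' : (J:ℂ) ≠ 0 := Nat.cast_ne_zero.mpr hJ.ne'
  split_ifs with h
  · obtain ⟨t, rfl⟩ := h
    push_cast
    have hc : ∀ m ∈ Finset.range J, Real.cos (2 * Real.pi * m * ((J:ℝ)*(t:ℝ)) / J) = 1 := by
      intro m _
      have he : (2 * Real.pi * m * ((J:ℝ)*(t:ℝ)) / J : ℝ) = ((m*t : ℤ) : ℝ) * (2*Real.pi) := by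
        push_cast; field_simp
      rw [he, Real.cos_int_mul_two_pi]
    rw [Finset.sum_congr rfl hc]
    simp
  · set θ : ℝ := 2 * Real.pi * q / J with hθ
    have key : ∀ m : ℕ, Real.cos (2 * Real.pi * m * q / J) = (Complex.exp ((θ:ℂ) * Complex.I) ^ m).re := by
      intro m
      rw [← Complex.exp_nat_mul]
      have he : (m:ℂ) * ((θ:ℂ) * Complex.I) = ((2 * Real.pi * m * q / J : ℝ) : ℂ) * Complex.I := by
        rw [hθ]; push_cast; ring
      rw [he, Complex.exp_ofReal_mul_I_re]
    simp_rw [key]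
    rw [← Complex.re_sum]
    have hζ1 : Complex.exp ((θ:ℂ) * Complex.I) ≠ 1 := by
      intro h1
      rw [Complex.exp_eq_one_iff] at h1
      obtain ⟨t, ht⟩ := h1
      apply h
      have hI : ((θ:ℂ)) = (t:ℂ) * (2 * Real.pi) := by
        have : ((θ:ℂ)) * Complex.I = ((t:ℂ) * (2 * Real.pi)) * Complex.I := by
          rw [ht]; ring
        exact mul_right_cancel₀ Complex.I_ne_zero this
      have hθt : θ = t * (2 * Real.pi) := by exact_mod_cast hI
      rw [hθ] at hθt
      refine ⟨t, ?_⟩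
      have : (q : ℝ) = (J:ℝ) * t := by
        field_simp at hθt
        have h2 : (2*Real.pi) * (q:ℝ) = (2*Real.pi) * ((J:ℝ)*t) := by rw [hθt]
        have hπ : (2*Real.pi) ≠ 0 := by positivity
        exact mul_left_cancel₀ hπ h2
      exact_mod_cast this
    have hζJ : Complex.exp ((θ:ℂ) * Complex.I) ^ J = 1 := by
      rw [← Complex.exp_nat_mul]
      have he : (J:ℂ) * ((θ:ℂ) * Complex.I) = (q:ℂ) * (2 * Real.pi * Complex.I) := by
        rw [hθ]; push_cast; field_simp
      rw [he, Complex.exp_int_mul_two_pi_mul_I]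
    rw [geom_sum_eq hζ1, hζJ]
    simp
open Finset

lemma sum_sub_reindex {J : ℕ} (hJ : 0 < J) (F : ℤ → ℝ) (hF : ∀ n : ℤ, F (n + J) = F n) :
    ∑ i ∈ Finset.range J, ∑ j ∈ Finset.range J, F ((i:ℤ) - j) =
      (J:ℝ) * ∑ n ∈ Finset.range J, F (n:ℤ) := by
  obtain ⟨K, rfl⟩ : ∃ K, J = K + 1 := ⟨J - 1, (Nat.succ_pred_eq_of_pos hJ).symm⟩
  set J := K + 1
  have step : ∀ i : ℕ, ∑ j ∈ Finset.range J, F (((i:ℤ)+1) - j) = ∑ j ∈ Finset.range J, F ((i:ℤ) - j) := by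
    intro i
    rw [Finset.sum_range_succ' (fun j => F (((i:ℤ)+1) - j)) K, Finset.sum_range_succ (fun j => F ((i:ℤ) - j)) K]
    have h1 : ∀ j : ℕ, F (((i:ℤ)+1) - ((j:ℤ)+1)) = F ((i:ℤ) - j) := by
      intro j; congr 1; push_cast; ring
    have h2 : F (((i:ℤ)+1) - (0:ℕ)) = F ((i:ℤ) - K) := by
      have := hF ((i:ℤ) - K)
      rw [← this]; congr 1; simp only [J]; push_cast; ring
    simp only [Nat.cast_add, Nat.cast_one] at *
    rw [h2]
    congr 1
    apply Finset.sum_congr rfl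
    intro j _
    exact_mod_cast h1 j
  have const : ∀ i : ℕ, ∑ j ∈ Finset.range J, F ((i:ℤ) - j) = ∑ j ∈ Finset.range J, F ((0:ℤ) - j) := by
    intro i
    induction i with
    | zero => norm_num
    | succ n ih =>
      have := step n
      push_cast at this ⊢
      rw [this]; exact ih
  have reflect : ∑ j ∈ Finset.range J, F ((K:ℤ) - j) = ∑ n ∈ Finset.range J, F (n:ℤ) := by
    rw [← Finset.sum_range_reflect (fun n => F (n:ℤ)) J]
    apply Finset.sum_congr rfl
    intro j hj
    have hj' : j ≤ K := Nat.lt_succ_iff.mp (Finset.mem_range.mp hj)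
    congr 1
    have : ((J - 1 - j : ℕ) : ℤ) = (K:ℤ) - j := by
      simp only [J]
      omega
    rw [this]
  have key : ∀ i : ℕ, ∑ j ∈ Finset.range J, F ((i:ℤ) - j) = ∑ n ∈ Finset.range J, F (n:ℤ) := by
    intro i
    rw [const i, ← const K, reflect]
  rw [Finset.sum_congr rfl (fun i _ => key i), Finset.sum_const, Finset.card_range, nsmul_eq_mul]

lemma cos_coeff_le {J m : ℕ} (hJ : 2 ≤ J) (hm1 : 1 ≤ m) (hm2 : m < J) :
    Real.cos (2*Real.pi*m/J) ≤ Real.cos (2*Real.pi/J) := by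
  have hJ0 : (0:ℝ) < J := by positivity
  have hπ := Real.pi_pos
  have hm1' : (1:ℝ) ≤ m := by exact_mod_cast hm1
  have hm2' : (m:ℝ) ≤ (J:ℝ) - 1 := by
    have : (m:ℝ) + 1 ≤ J := by exact_mod_cast hm2
    linarith
  have hlow : 2*Real.pi/J ≤ 2*Real.pi*m/J := by
    apply div_le_div_of_nonneg_right ?_ hJ0.le |>.trans_eq rfl
    nlinarith
  have hhigh : 2*Real.pi*m/J ≤ 2*Real.pi - 2*Real.pi/J := by
    rw [div_le_iff₀ hJ0]
    have h2 : (2*Real.pi - 2*Real.pi/J) * J = 2*Real.pi*((J:ℝ)-1) := by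
      field_simp
    rw [h2]
    nlinarith
  have h0 : 0 ≤ 2*Real.pi/J := by positivity
  rcases le_or_gt (2*Real.pi*m/J) Real.pi with hle | hgt
  · exact Real.cos_le_cos_of_nonneg_of_le_pi h0 hle hlow
  · have heq : Real.cos (2*Real.pi*m/J) = Real.cos (2*Real.pi - 2*Real.pi*m/J) := by
      rw [Real.cos_two_pi_sub]
    rw [heq]
    apply Real.cos_le_cos_of_nonneg_of_le_pi h0 ?_ ?_
    · linarith
    · linarith

lemma int_dvd_small {J : ℕ} (t : ℤ) (h1 : -(J:ℤ) < t) (h2 : t < J) : ((J:ℤ) ∣ t ↔ t = 0) := by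
  constructor
  · rintro ⟨s, rfl⟩
    rcases Nat.eq_zero_or_pos J with rfl | hJpos
    · simp at h1 h2
    · have hJ' : (0:ℤ) < J := by exact_mod_cast hJpos
      have hs1 : s < 1 := by
        by_contra hc
        push_neg at hc
        nlinarith
      have hs2 : -1 < s := by
        by_contra hc
        push_neg at hc
        nlinarith
      have : s = 0 := by omega
      rw [this, mul_zero]
  · rintro rfl; exact dvd_zero _


set_option maxHeartbeats 2000000 in
open RealInnerProductSpace in
/-- Let `k ≥ 1`, `J ≥ 2` be integers, `A` an orthogonal transformation
(linear isometry equivalence) of `ℝ^k` with `A^J = Id`, `b ∈ ℝ^k`, and let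
`g : x ↦ A x + b`. If `0 < r < √(2 sin (π/J))` and `dist (g x) x < r` for all `x` with
`‖x‖ ≤ 1/r`, then `A = Id`, i.e. `g` is a translation. -/
theorem stmt_0 (k J : ℕ) (hk : 1 ≤ k) (hJ : 2 ≤ J)
    (A : EuclideanSpace ℝ (Fin k) ≃ₗᵢ[ℝ] EuclideanSpace ℝ (Fin k))
    (hAJ : A ^ J = 1)
    (b : EuclideanSpace ℝ (Fin k)) (r : ℝ)
    (hr0 : 0 < r) (hr : r < Real.sqrt (2 * Real.sin (Real.pi / J)))
    (hmove : ∀ x : EuclideanSpace ℝ (Fin k), ‖x‖ ≤ 1 / r → dist (A x + b) x < r) :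
    A = 1 := by
  by_contra hA
  have hJ0 : 0 < J := by omega
  have hJR : (0:ℝ) < J := by positivity
  have hπ := Real.pi_pos
  -- sin (π/J) > 0
  have hs : 0 < Real.sin (Real.pi / J) := by
    apply Real.sin_pos_of_pos_of_lt_pi
    · positivity
    · rw [div_lt_iff₀ hJR]
      have h2J : (2:ℝ) ≤ J := by exact_mod_cast hJ
      nlinarith
  have hr2 : r ^ 2 < 2 * Real.sin (Real.pi / J) := (Real.lt_sqrt hr0.le).mp hr
  -- displacement bound
  have hdisp : ∀ x : EuclideanSpace ℝ (Fin k), ‖x‖ ≤ 1 / r → ‖A x - x‖ < r := by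
    intro x hx
    have h1 := hmove x hx
    have h2 := hmove (-x) (by rwa [norm_neg])
    rw [dist_eq_norm] at h1 h2
    have e2 : A (-x) + b - (-x) = -(A x - x) + b := by
      rw [map_neg]; abel
    rw [e2] at h2
    have key : (2:ℝ) * ‖A x - x‖ < 2 * r := by
      have e3 : (2:ℝ) • (A x - x) = (A x + b - x) - (-(A x - x) + b) := by module
      calc (2:ℝ) * ‖A x - x‖ = ‖(2:ℝ) • (A x - x)‖ := by
            rw [norm_smul]; simp
        _ = ‖(A x + b - x) - (-(A x - x) + b)‖ := by rw [e3]
        _ ≤ ‖A x + b - x‖ + ‖-(A x - x) + b‖ := norm_sub_le _ _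
        _ < r + r := add_lt_add h1 h2
        _ = 2 * r := by ring
    linarith
  -- a vector moved by A
  obtain ⟨v, hv⟩ : ∃ v, A v ≠ v := by
    by_contra h; push_neg at h
    exact hA (LinearIsometryEquiv.ext fun x => h x)
  -- construct u with zero orbit-sum
  set w := ∑ i ∈ Finset.range J, (A ^ i) v with hw_def
  have hAw : A w = w := by
    have h1 : A w = ∑ i ∈ Finset.range J, (A ^ (i+1)) v := by
      rw [hw_def, map_sum]
      exact Finset.sum_congr rfl fun i _ => by rw [pow_succ']; rfl
    have h2 : ∑ i ∈ Finset.range J, (A ^ (i+1)) v + (A ^ 0) v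
        = ∑ i ∈ Finset.range J, (A ^ i) v + (A ^ J) v := by
      rw [← Finset.sum_range_succ' (fun i => (A ^ i) v) J, Finset.sum_range_succ]
    have h3 : (A ^ 0) v = v := by rw [pow_zero]; rfl
    have h4 : (A ^ J) v = v := by rw [hAJ]; rfl
    rw [h1]
    rw [h3, h4] at h2
    rw [← hw_def] at h2
    exact add_right_cancel h2
  set u := v - (J:ℝ)⁻¹ • w with hu_def
  have hAu : A u - u = A v - v := by
    rw [hu_def, map_sub, map_smul, hAw]
    abel
  have hu0 : u ≠ 0 := by
    intro h0
    apply hv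
    have : A u - u = 0 := by rw [h0, map_zero, sub_zero]
    rw [this] at hAu
    have := hAu.symm
    rwa [sub_eq_zero] at this
  have hfix : ∀ i : ℕ, (A ^ i) w = w := by
    intro i
    induction i with
    | zero => rw [pow_zero]; rfl
    | succ n ih =>
      rw [pow_succ]
      show (A ^ n) (A w) = w
      rw [hAw, ih]
  have hsum0 : ∑ i ∈ Finset.range J, (A ^ i) u = 0 := by
    have : ∀ i ∈ Finset.range J, (A ^ i) u = (A ^ i) v - (J:ℝ)⁻¹ • w := by
      intro i _
      rw [hu_def, map_sub, map_smul, hfix]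
    rw [Finset.sum_congr rfl this, Finset.sum_sub_distrib, ← hw_def, Finset.sum_const,
      Finset.card_range]
    have hJw : (J:ℕ) • ((J:ℝ)⁻¹ • w) = w := by
      rw [← Nat.cast_smul_eq_nsmul ℝ, smul_smul, mul_inv_cancel₀ (ne_of_gt hJR), one_smul]
    rw [hJw, sub_self]
  -- integer powers
  have hAJz : A ^ (J:ℤ) = 1 := by rw [zpow_natCast, hAJ]
  set a : ℤ → ℝ := fun n => ⟪(A ^ n) u, u⟫ with ha_def
  have ha_per : ∀ n : ℤ, a (n + J) = a n := by
    intro n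
    simp only [ha_def]
    rw [zpow_add, hAJz, mul_one]
  have hinner : ∀ i j : ℤ, ⟪(A ^ i) u, (A ^ j) u⟫ = a (i - j) := by
    intro i j
    have hmap := (A ^ (-j)).inner_map_map ((A ^ i) u) ((A ^ j) u)
    rw [← hmap]
    have e1 : (A ^ (-j)) ((A ^ i) u) = (A ^ (i - j)) u := by
      have hmul : A ^ (-j) * A ^ i = A ^ (i - j) := by
        rw [← zpow_add]; congr 1; ring
      calc (A ^ (-j)) ((A ^ i) u) = (A ^ (-j) * A ^ i) u := rfl
        _ = (A ^ (i - j)) u := by rw [hmul]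
    have e2 : (A ^ (-j)) ((A ^ j) u) = u := by
      have hmul : A ^ (-j) * A ^ j = 1 := by
        rw [← zpow_add]; norm_num
      calc (A ^ (-j)) ((A ^ j) u) = (A ^ (-j) * A ^ j) u := rfl
        _ = u := by rw [hmul]; rfl
    rw [e1, e2]
  have ha_even : ∀ n : ℤ, a (-n) = a n := by
    intro n
    have h1 := hinner 0 n
    rw [zpow_zero] at h1
    have h2 : ((1 : EuclideanSpace ℝ (Fin k) ≃ₗᵢ[ℝ] EuclideanSpace ℝ (Fin k))) u = u := rfl
    rw [h2] at h1
    rw [show (0:ℤ) - n = -n by ring] at h1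
    rw [← h1, real_inner_comm]
  have ha0 : a 0 = ‖u‖ ^ 2 := by
    simp only [ha_def, zpow_zero]
    rw [show ((1 : EuclideanSpace ℝ (Fin k) ≃ₗᵢ[ℝ] EuclideanSpace ℝ (Fin k))) u = u from rfl]
    exact real_inner_self_eq_norm_sq u
  have ha0pos : 0 < a 0 := by
    rw [ha0]
    exact pow_pos (norm_pos_iff.mpr hu0) 2
  -- natural-indexed orbit
  set c : ℕ → EuclideanSpace ℝ (Fin k) := fun i => (A ^ (i:ℤ)) u with hc_def
  have hc_inner : ∀ i j : ℕ, ⟪c i, c j⟫ = a ((i:ℤ) - j) := fun i j => hinner i j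
  have hc_sum : ∑ i ∈ Finset.range J, c i = 0 := by
    rw [← hsum0]
    exact Finset.sum_congr rfl fun i _ => by
      show (A ^ (i:ℤ)) u = (A ^ i) u
      rw [zpow_natCast]
  -- inner product expansion
  have expand : ∀ f g : ℕ → ℝ,
      ⟪∑ i ∈ Finset.range J, f i • c i, ∑ j ∈ Finset.range J, g j • c j⟫
        = ∑ i ∈ Finset.range J, ∑ j ∈ Finset.range J, f i * g j * a ((i:ℤ) - j) := by
    intro f g
    rw [sum_inner]
    refine Finset.sum_congr rfl fun i _ => ?_
    rw [inner_sum]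
    refine Finset.sum_congr rfl fun j _ => ?_
    rw [real_inner_smul_left, real_inner_smul_right, hc_inner]
    ring
  -- the trigonometric vectors
  set P : ℕ → EuclideanSpace ℝ (Fin k) :=
    fun m => ∑ i ∈ Finset.range J, Real.cos (2*Real.pi*m*i/J) • c i with hP_def
  set Q : ℕ → EuclideanSpace ℝ (Fin k) :=
    fun m => ∑ i ∈ Finset.range J, Real.sin (2*Real.pi*m*i/J) • c i with hQ_def
  have key1 : ∀ m : ℕ, ‖P m‖^2 + ‖Q m‖^2
      = (J:ℝ) * ∑ n ∈ Finset.range J, Real.cos (2*Real.pi*m*n/J) * a n := by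
    intro m
    have hP : ‖P m‖^2 = ∑ i ∈ Finset.range J, ∑ j ∈ Finset.range J,
        Real.cos (2*Real.pi*m*i/J) * Real.cos (2*Real.pi*m*j/J) * a ((i:ℤ) - j) := by
      rw [← real_inner_self_eq_norm_sq]
      exact expand _ _
    have hQ' : ‖Q m‖^2 = ∑ i ∈ Finset.range J, ∑ j ∈ Finset.range J,
        Real.sin (2*Real.pi*m*i/J) * Real.sin (2*Real.pi*m*j/J) * a ((i:ℤ) - j) := by
      rw [← real_inner_self_eq_norm_sq]
      exact expand _ _
    rw [hP, hQ', ← Finset.sum_add_distrib]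
    have hstep : ∀ i ∈ Finset.range J, ∀ j ∈ Finset.range J,
        Real.cos (2*Real.pi*m*i/J) * Real.cos (2*Real.pi*m*j/J) * a ((i:ℤ) - j)
          + Real.sin (2*Real.pi*m*i/J) * Real.sin (2*Real.pi*m*j/J) * a ((i:ℤ) - j)
        = Real.cos (2*Real.pi*m*(((i:ℤ) - j : ℤ) : ℝ)/J) * a ((i:ℤ) - j) := by
      intro i _ j _
      have harg : (2*Real.pi*m*(((i:ℤ) - j : ℤ) : ℝ)/J)
          = 2*Real.pi*m*i/J - 2*Real.pi*m*j/J := by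
        push_cast
        ring
      rw [harg, Real.cos_sub]
      ring
    have hsum_eq : ∑ i ∈ Finset.range J, (∑ j ∈ Finset.range J,
        Real.cos (2*Real.pi*m*i/J) * Real.cos (2*Real.pi*m*j/J) * a ((i:ℤ) - j)
          + ∑ j ∈ Finset.range J,
        Real.sin (2*Real.pi*m*i/J) * Real.sin (2*Real.pi*m*j/J) * a ((i:ℤ) - j))
        = ∑ i ∈ Finset.range J, ∑ j ∈ Finset.range J,
          Real.cos (2*Real.pi*m*(((i:ℤ) - j : ℤ) : ℝ)/J) * a ((i:ℤ) - j) := by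
      refine Finset.sum_congr rfl fun i hi => ?_
      rw [← Finset.sum_add_distrib]
      exact Finset.sum_congr rfl fun j hj => hstep i hi j hj
    rw [hsum_eq]
    have hFper : ∀ n : ℤ, Real.cos (2*Real.pi*m*((n + (J:ℤ) : ℤ) : ℝ)/J) * a (n + J)
        = Real.cos (2*Real.pi*m*(n : ℝ)/J) * a n := by
      intro n
      rw [ha_per]
      congr 1
      have harg : (2*Real.pi*m*((n + (J:ℤ) : ℤ) : ℝ)/J)
          = 2*Real.pi*m*(n:ℝ)/J + (m:ℕ) * (2*Real.pi) := by
        push_cast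
        field_simp
      rw [harg, Real.cos_add_nat_mul_two_pi]
    rw [sum_sub_reindex hJ0 (fun n : ℤ => Real.cos (2*Real.pi*m*(n : ℝ)/J) * a n) hFper]
    norm_cast
  -- nonnegativity of the test sum
  have hT0 : 0 ≤ ∑ m ∈ Finset.range J,
      (Real.cos (2*Real.pi/J) - Real.cos (2*Real.pi*m/J)) * (‖P m‖^2 + ‖Q m‖^2) := by
    apply Finset.sum_nonneg
    intro m hm
    rcases Nat.eq_zero_or_pos m with rfl | hm1
    · have hP0 : P 0 = 0 := by
        rw [hP_def]
        simp only [Nat.cast_zero, mul_zero, zero_mul, zero_div, Real.cos_zero, one_smul]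
        exact hc_sum
      have hQ0 : Q 0 = 0 := by
        rw [hQ_def]
        simp [Real.sin_zero]
      rw [hP0, hQ0]
      simp
    · apply mul_nonneg
      · have := cos_coeff_le hJ hm1 (Finset.mem_range.mp hm)
        linarith
      · positivity
  -- rewrite the test sum
  have hT1 : ∑ m ∈ Finset.range J,
      (Real.cos (2*Real.pi/J) - Real.cos (2*Real.pi*m/J)) * (‖P m‖^2 + ‖Q m‖^2)
      = (J:ℝ) * ∑ n ∈ Finset.range J, ∑ m ∈ Finset.range J,
        (Real.cos (2*Real.pi/J) - Real.cos (2*Real.pi*m/J)) * (Real.cos (2*Real.pi*m*n/J) * a n) := by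
    have e1 : ∀ m ∈ Finset.range J,
        (Real.cos (2*Real.pi/J) - Real.cos (2*Real.pi*m/J)) * (‖P m‖^2 + ‖Q m‖^2)
        = ∑ n ∈ Finset.range J, (J:ℝ) * ((Real.cos (2*Real.pi/J) - Real.cos (2*Real.pi*m/J))
            * (Real.cos (2*Real.pi*m*n/J) * a n)) := by
      intro m _
      rw [key1 m, Finset.mul_sum, Finset.mul_sum]
      exact Finset.sum_congr rfl fun n _ => by ring
    rw [Finset.sum_congr rfl e1, Finset.sum_comm, Finset.mul_sum]
    exact Finset.sum_congr rfl fun n _ => (Finset.mul_sum _ _ _).symm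
  -- evaluate the inner sums
  have hval : ∀ n ∈ Finset.range J, ∑ m ∈ Finset.range J,
      (Real.cos (2*Real.pi/J) - Real.cos (2*Real.pi*m/J)) * (Real.cos (2*Real.pi*m*n/J) * a n)
      = a n * Real.cos (2*Real.pi/J) * (if n = 0 then (J:ℝ) else 0)
        - a n / 2 * (if n = J - 1 then (J:ℝ) else 0)
        - a n / 2 * (if n = 1 then (J:ℝ) else 0) := by
    intro n hn
    have hnJ : n < J := Finset.mem_range.mp hn
    have hpt : ∀ m ∈ Finset.range J,
        (Real.cos (2*Real.pi/J) - Real.cos (2*Real.pi*m/J)) * (Real.cos (2*Real.pi*m*n/J) * a n)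
        = a n * Real.cos (2*Real.pi/J) * Real.cos (2*Real.pi*m*(((n:ℤ)):ℝ)/J)
          - a n / 2 * Real.cos (2*Real.pi*m*((((n:ℤ)+1) : ℤ):ℝ)/J)
          - a n / 2 * Real.cos (2*Real.pi*m*((((n:ℤ)-1) : ℤ):ℝ)/J) := by
      intro m _
      have h1 : Real.cos (2*Real.pi*m*((((n:ℤ)+1) : ℤ):ℝ)/J)
          = Real.cos (2*Real.pi*m*n/J + 2*Real.pi*m/J) := by
        congr 1; push_cast; ring
      have h2 : Real.cos (2*Real.pi*m*((((n:ℤ)-1) : ℤ):ℝ)/J)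
          = Real.cos (2*Real.pi*m*n/J - 2*Real.pi*m/J) := by
        congr 1; push_cast; ring
      have h3 : (((n:ℤ)):ℝ) = (n:ℝ) := by push_cast; ring
      rw [h1, h2, h3, Real.cos_add, Real.cos_sub]
      ring
    rw [Finset.sum_congr rfl hpt, Finset.sum_sub_distrib, Finset.sum_sub_distrib,
      ← Finset.mul_sum, ← Finset.mul_sum, ← Finset.mul_sum,
      cos_sum_dvd hJ0 ((n:ℤ)), cos_sum_dvd hJ0 ((n:ℤ)+1), cos_sum_dvd hJ0 ((n:ℤ)-1)]
    have e0 : ((J:ℤ) ∣ (n:ℤ)) = (n = 0) := by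
      rw [int_dvd_small (n:ℤ) (by omega) (by omega)]
      simp only [eq_iff_iff]
      omega
    have e1 : ((J:ℤ) ∣ ((n:ℤ)+1)) = (n = J - 1) := by
      simp only [eq_iff_iff]
      constructor
      · intro hdvd
        by_contra hne
        have hlt : (n:ℤ)+1 < J := by omega
        have := (int_dvd_small ((n:ℤ)+1) (by omega) hlt).mp hdvd
        omega
      · intro he
        refine ⟨1, by omega⟩
    have e2 : ((J:ℤ) ∣ ((n:ℤ)-1)) = (n = 1) := by
      rw [int_dvd_small ((n:ℤ)-1) (by omega) (by omega)]
      simp only [eq_iff_iff]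
      omega
    simp only [e0, e1, e2]
  have hTval : ∑ n ∈ Finset.range J, ∑ m ∈ Finset.range J,
      (Real.cos (2*Real.pi/J) - Real.cos (2*Real.pi*m/J)) * (Real.cos (2*Real.pi*m*n/J) * a n)
      = a 0 * Real.cos (2*Real.pi/J) * J - a 1 * J := by
    rw [Finset.sum_congr rfl hval, Finset.sum_sub_distrib, Finset.sum_sub_distrib]
    have s0 : ∑ n ∈ Finset.range J, a n * Real.cos (2*Real.pi/J) * (if n = 0 then (J:ℝ) else 0)
        = a 0 * Real.cos (2*Real.pi/J) * J := by
      rw [Finset.sum_congr rfl (fun n _ => by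
        rw [show a (n:ℤ) * Real.cos (2*Real.pi/J) * (if n = 0 then (J:ℝ) else 0)
          = (if n = 0 then a (n:ℤ) * Real.cos (2*Real.pi/J) * J else 0) from by split_ifs <;> ring]),
        Finset.sum_ite_eq' (Finset.range J) 0]
      rw [if_pos (Finset.mem_range.mpr hJ0)]
      norm_num
    have s1 : ∑ n ∈ Finset.range J, a n / 2 * (if n = J - 1 then (J:ℝ) else 0)
        = a 1 / 2 * J := by
      rw [Finset.sum_congr rfl (fun n _ => by
        rw [show a (n:ℤ) / 2 * (if n = J - 1 then (J:ℝ) else 0)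
          = (if n = J - 1 then a (n:ℤ) / 2 * J else 0) from by split_ifs <;> ring]),
        Finset.sum_ite_eq' (Finset.range J) (J-1)]
      rw [if_pos (Finset.mem_range.mpr (by omega))]
      have hcast : ((J - 1 : ℕ) : ℤ) = -1 + J := by omega
      rw [hcast, ha_per (-1), ha_even 1]
    have s2 : ∑ n ∈ Finset.range J, a n / 2 * (if n = 1 then (J:ℝ) else 0)
        = a 1 / 2 * J := by
      rw [Finset.sum_congr rfl (fun n _ => by
        rw [show a (n:ℤ) / 2 * (if n = 1 then (J:ℝ) else 0)
          = (if n = 1 then a (n:ℤ) / 2 * J else 0) from by split_ifs <;> ring]),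
        Finset.sum_ite_eq' (Finset.range J) 1]
      rw [if_pos (Finset.mem_range.mpr (by omega))]
      norm_num
    rw [s0, s1, s2]
    ring
  -- the spectral-type inequality
  have hfin : a 1 ≤ Real.cos (2*Real.pi/J) * a 0 := by
    rw [hT1, hTval] at hT0
    by_contra hneg
    push_neg at hneg
    have hx : a 0 * Real.cos (2*Real.pi/J) * J - a 1 * J < 0 := by
      nlinarith [mul_pos hJR (sub_pos.mpr hneg)]
    have hy := mul_neg_of_pos_of_neg hJR hx
    linarith
  -- norm bound from the hypothesis
  have hnu : 0 < ‖u‖ := norm_pos_iff.mpr hu0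
  have hmv : ‖A u - u‖ < r^2 * ‖u‖ := by
    set x := (r * ‖u‖)⁻¹ • u with hx_def
    have hxnorm : ‖x‖ = 1 / r := by
      rw [hx_def, norm_smul, norm_inv, Real.norm_eq_abs, abs_of_pos (by positivity)]
      field_simp
    have hd := hdisp x (le_of_eq hxnorm)
    have hAx : A x - x = (r * ‖u‖)⁻¹ • (A u - u) := by
      rw [hx_def, map_smul, hu_def]
      module
    rw [hAx, norm_smul, norm_inv, Real.norm_eq_abs, abs_of_pos (by positivity)] at hd
    have hq : ‖A u - u‖ = (r * ‖u‖) * ((r * ‖u‖)⁻¹ * ‖A u - u‖) := by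
      field_simp
    rw [hq]
    calc (r * ‖u‖) * ((r * ‖u‖)⁻¹ * ‖A u - u‖) < (r * ‖u‖) * r :=
          mul_lt_mul_of_pos_left hd (by positivity)
      _ = r^2 * ‖u‖ := by ring
  have ha1 : ⟪A u, u⟫ = a 1 := by
    have : (A ^ (1:ℤ)) u = A u := by rw [zpow_one]
    rw [← this]
  have hnorm2 : ‖A u - u‖^2 = 2 * a 0 - 2 * a 1 := by
    rw [norm_sub_sq_real, A.norm_map, ha1, ← ha0]
    ring
  have hcos2 : Real.cos (2*Real.pi/(J:ℝ)) = 1 - 2 * Real.sin (Real.pi/J)^2 := by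
    have h2 : 2*Real.pi/(J:ℝ) = 2*(Real.pi/J) := by ring
    rw [h2, Real.cos_two_mul]
    have := Real.sin_sq_add_cos_sq (Real.pi/(J:ℝ))
    nlinarith
  have h1 : 4 * Real.sin (Real.pi/J)^2 * a 0 ≤ ‖A u - u‖^2 := by
    rw [hnorm2]
    rw [hcos2] at hfin
    nlinarith [hfin, ha0pos]
  have h2 : ‖A u - u‖^2 < (r^2*‖u‖)^2 := by
    nlinarith [hmv, norm_nonneg (A u - u)]
  have h3 : (r^2*‖u‖)^2 = r^4 * a 0 := by rw [ha0]; ring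
  have h4 : r^4 < 4 * Real.sin (Real.pi/J)^2 := by
    nlinarith [hr2, sq_nonneg r, hs]
  have hA2 : ‖A u - u‖^2 < r^4 * a 0 := by rw [← h3]; exact h2
  have hB : r^4 * a 0 < 4 * Real.sin (Real.pi/J)^2 * a 0 := mul_lt_mul_of_pos_right h4 ha0pos
  linarith [h1, hA2, hB]
end

section
/- Let k ≥ 1 and J ≥ 2 be integers, and let A be an orthogonal transformation of Euclidean space ℝ^k with A^J = Id and A ≠ Id. Then there exists a unit vector v ∈ ℝ^k with ‖A·v − v‖ ≥ 2·sin(π/J). -/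
open Real Finset

/-- Let `k ≥ 1`, `J ≥ 2` be integers and `A` an orthogonal transformation
(linear isometry equivalence) of `ℝ^k` with `A^J = Id` and `A ≠ Id`. Then there exists a
unit vector `v` with `‖A v - v‖ ≥ 2 sin (π/J)`. -/
theorem stmt_1 (k J : ℕ) (hk : 1 ≤ k) (hJ : 2 ≤ J)
    (A : EuclideanSpace ℝ (Fin k) ≃ₗᵢ[ℝ] EuclideanSpace ℝ (Fin k))
    (hAJ : A ^ J = 1) (hA : A ≠ 1) :
    ∃ v : EuclideanSpace ℝ (Fin k), ‖v‖ = 1 ∧ 2 * Real.sin (Real.pi / J) ≤ ‖A v - v‖ := by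
  classical
  -- the matrix of A
  set M : Matrix (Fin k) (Fin k) ℝ := Matrix.of fun i j => A (EuclideanSpace.single j 1) i with hMdef
  have hM : ∀ x : EuclideanSpace ℝ (Fin k), ∀ i, M.mulVec x i = A x i := by
    intro x i
    have hx : x = ∑ j, x j • (EuclideanSpace.single j (1:ℝ) : EuclideanSpace ℝ (Fin k)) := by
      ext r
      rw [WithLp.ofLp_sum, Finset.sum_apply]
      simp [Pi.single_apply]
    calc M.mulVec x i = ∑ j, x j * A (EuclideanSpace.single j 1) i := by
          simp [Matrix.mulVec, dotProduct, hMdef, mul_comm]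
      _ = A x i := by
          conv_rhs => rw [hx]
          rw [map_sum, WithLp.ofLp_sum, Finset.sum_apply]
          refine Finset.sum_congr rfl fun j _ => ?_
          rw [map_smul]
          rfl
  -- complexification
  set B : (Fin k → ℂ) →ₗ[ℂ] (Fin k → ℂ) := (M.map (Complex.ofReal)).mulVecLin with hBdef
  have hBre : ∀ (z : Fin k → ℂ) (i : Fin k),
      (B z i).re = A (WithLp.toLp 2 (fun j => (z j).re)) i ∧ (B z i).im = A (WithLp.toLp 2 (fun j => (z j).im)) i := by
    intro z i
    have h1 : B z i = ∑ j, (M i j : ℂ) * z j := by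
      simp [hBdef, Matrix.mulVecLin, Matrix.mulVec, dotProduct]
    constructor
    · rw [h1, Complex.re_sum, ← hM]
      simp [Matrix.mulVec, dotProduct]
    · rw [h1, Complex.im_sum, ← hM]
      simp [Matrix.mulVec, dotProduct]
  -- powers of B
  have hBpow : ∀ (n : ℕ) (z : Fin k → ℂ) (i : Fin k),
      ((B ^ n) z i).re = (A ^ n) (WithLp.toLp 2 (fun j => (z j).re)) i ∧
      ((B ^ n) z i).im = (A ^ n) (WithLp.toLp 2 (fun j => (z j).im)) i := by
    intro n
    induction n with
    | zero => intro z i; simp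
    | succ n ih =>
      intro z i
      have h1 : (B ^ (n+1)) z = B ((B ^ n) z) := by
        rw [pow_succ']; rfl
      have h2 : ∀ w : EuclideanSpace ℝ (Fin k), (A ^ (n+1)) w = A ((A ^ n) w) := by
        intro w; rw [pow_succ']; rfl
      rw [h1, h2, h2]
      have e1 : WithLp.toLp 2 (fun j => ((B ^ n) z j).re) = (A ^ n) (WithLp.toLp 2 (fun j => (z j).re)) :=
        PiLp.ext fun j => (ih z j).1
      have e2 : WithLp.toLp 2 (fun j => ((B ^ n) z j).im) = (A ^ n) (WithLp.toLp 2 (fun j => (z j).im)) :=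
        PiLp.ext fun j => (ih z j).2
      constructor
      · rw [(hBre ((B ^ n) z) i).1, e1]
      · rw [(hBre ((B ^ n) z) i).2, e2]
  -- B^J = 1
  have hBJ : B ^ J = 1 := by
    apply LinearMap.ext
    intro z
    funext i
    have hA1 : ∀ w : EuclideanSpace ℝ (Fin k), (A ^ J) w = w := by
      intro w; rw [hAJ]; rfl
    apply Complex.ext
    · rw [(hBpow J z i).1, hA1]; rfl
    · rw [(hBpow J z i).2, hA1]; rfl
  -- B ≠ 1
  obtain ⟨x₀, hx₀⟩ : ∃ x, A x ≠ x := by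
    by_contra h
    push_neg at h
    exact hA (LinearIsometryEquiv.ext fun x => h x)
  have hBne : B ((fun i => (x₀ i : ℂ))) ≠ (fun i => (x₀ i : ℂ)) := by
    intro h
    apply hx₀
    ext i
    have := congrFun h i
    have h1 := (hBre (fun i => (x₀ i : ℂ)) i).1
    simp only at h1
    rw [this] at h1
    simp at h1
    convert h1.symm using 2
  -- eigenvalue on range of B - 1
  set S : Submodule ℂ (Fin k → ℂ) := LinearMap.range (B - 1) with hSdef
  have hSne : Nontrivial S := by
    refine Submodule.nontrivial_iff_ne_bot.mpr ?_
    intro hbot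
    apply hBne
    have : (B - 1) (fun i => (x₀ i : ℂ)) ∈ S := LinearMap.mem_range_self _ _
    rw [hbot, Submodule.mem_bot] at this
    have := sub_eq_zero.mp this
    simpa using this
  have hinv : ∀ w ∈ S, B w ∈ S := by
    rintro w ⟨u, rfl⟩
    exact ⟨B u, by simp [LinearMap.sub_apply, map_sub]⟩
  obtain ⟨μ, hμ⟩ := Module.End.exists_eigenvalue (B.restrict hinv)
  obtain ⟨zv, hzv⟩ := hμ.exists_hasEigenvector
  set z : Fin k → ℂ := (zv : Fin k → ℂ) with hzdef
  have hz0 : z ≠ 0 := by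
    simpa [hzdef] using (Submodule.coe_eq_zero.not.mpr hzv.2)
  have hBz : B z = μ • z := by
    have := hzv.apply_eq_smul
    have h2 := congrArg (Subtype.val) this
    rw [LinearMap.restrict_apply] at h2
    simpa [hzdef] using h2
  have hBzpow : ∀ n : ℕ, (B ^ n) z = (μ ^ n) • z := by
    intro n
    induction n with
    | zero => simp
    | succ n ih =>
      have h1 : (B ^ (n+1)) z = B ((B ^ n) z) := by rw [pow_succ']; rfl
      rw [h1, ih, map_smul, hBz, smul_smul, pow_succ, mul_comm]
  have hgeom : (∑ i ∈ Finset.range J, μ ^ i) = 0 := by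
    obtain ⟨w, hw⟩ := zv.2
    have h1 : (∑ i ∈ Finset.range J, B ^ i) z = 0 := by
      have h2 : ((∑ i ∈ Finset.range J, B ^ i) * (B - 1)) w = (B ^ J - 1) w := by
        rw [geom_sum_mul]
      rw [hBJ] at h2
      simp only [LinearMap.sub_apply, Module.End.one_apply, sub_self] at h2
      calc (∑ i ∈ Finset.range J, B ^ i) z
          = (∑ i ∈ Finset.range J, B ^ i) ((B - 1) w) := by rw [hw]
        _ = ((∑ i ∈ Finset.range J, B ^ i) * (B - 1)) w := rfl
        _ = 0 := h2
    have h3 : (∑ i ∈ Finset.range J, B ^ i) z = (∑ i ∈ Finset.range J, μ ^ i) • z := by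
      rw [LinearMap.sum_apply]
      rw [Finset.sum_congr rfl (fun i _ => hBzpow i), ← Finset.sum_smul]
    rw [h3] at h1
    rcases smul_eq_zero.mp h1 with h | h
    · exact h
    · exact absurd h hz0
  have hμJ : μ ^ J = 1 := by
    have := geom_sum_mul μ J
    rw [hgeom, zero_mul] at this
    exact sub_eq_zero.mp this.symm
  have hμ1 : μ ≠ 1 := by
    intro h
    rw [h] at hgeom
    simp only [one_pow, Finset.sum_const, Finset.card_range, nsmul_eq_mul, mul_one] at hgeom
    have : J = 0 := Nat.cast_eq_zero.mp hgeom
    omega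
  have hJ0 : (J : ℝ) ≠ 0 := by positivity
  have habs : ‖μ‖ = 1 := by
    have h1 : ‖μ‖ ^ J = 1 := by
      rw [← norm_pow, hμJ, norm_one]
    rcases lt_trichotomy (‖μ‖) 1 with h | h | h
    · have := pow_lt_one₀ (norm_nonneg μ) h (by omega : J ≠ 0)
      rw [h1] at this; exact absurd this (lt_irrefl _)
    · exact h
    · have := one_lt_pow₀ h (by omega : J ≠ 0)
      rw [h1] at this; exact absurd this (lt_irrefl _)
  have hμ0 : μ ≠ 0 := by
    intro h; rw [h, norm_zero] at habs; norm_num at habs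
  have hμexp : μ = Complex.exp (μ.arg * Complex.I) := by
    conv_lhs => rw [← Complex.norm_mul_exp_arg_mul_I μ]
    rw [habs]; simp
  have harg0 : μ.arg ≠ 0 := by
    intro h
    apply hμ1
    rw [hμexp, h]
    simp
  obtain ⟨m, hm⟩ : ∃ m : ℤ, ((J:ℂ)) * (↑μ.arg * Complex.I) = m * (2 * Real.pi * Complex.I) := by
    apply Complex.exp_eq_one_iff.mp
    rw [Complex.exp_nat_mul, ← hμexp, hμJ]
  have hm' : (J : ℝ) * μ.arg = m * (2 * Real.pi) := by
    have := congrArg Complex.im hm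
    simpa using this
  have hm0 : m ≠ 0 := by
    intro h
    rw [h] at hm'
    simp at hm'
    rcases hm' with h | h
    · omega
    · exact harg0 h
  have hπ := Real.pi_pos
  have hJpos : (0:ℝ) < J := by positivity
  have hlb : 2 * (Real.pi / J) ≤ |μ.arg| := by
    have hm1 : (1:ℝ) ≤ |(m:ℝ)| := by exact_mod_cast Int.one_le_abs hm0
    have h2 : (J:ℝ) * |μ.arg| = |(m:ℝ)| * (2 * Real.pi) := by
      rw [← abs_of_pos hJpos, ← abs_mul, hm', abs_mul, abs_of_pos (by positivity : (0:ℝ) < 2 * Real.pi)]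
    rw [show 2 * (Real.pi / J) = 2 * Real.pi / (J:ℝ) by ring, div_le_iff₀ hJpos]
    nlinarith
  have hub : |μ.arg| ≤ Real.pi := Complex.abs_arg_le_pi μ
  have hcos : μ.re ≤ Real.cos (2 * (Real.pi / J)) := by
    have h1 : Real.cos μ.arg = μ.re := by
      rw [Complex.cos_arg hμ0, habs, div_one]
    rw [← h1, ← Real.cos_abs]
    exact Real.cos_le_cos_of_nonneg_of_le_pi (by positivity) hub hlb
  -- extract real vectors
  set a : ℝ := μ.re with hadef
  set b : ℝ := μ.im with hbdef
  set x : EuclideanSpace ℝ (Fin k) := WithLp.toLp 2 (fun i => (z i).re) with hxdef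
  set y : EuclideanSpace ℝ (Fin k) := WithLp.toLp 2 (fun i => (z i).im) with hydef
  have hAx : A x = a • x - b • y := by
    ext i
    have h1 := (hBre z i).1
    rw [hBz] at h1
    have h2 : (μ • z) i = μ * z i := rfl
    rw [h2, Complex.mul_re] at h1
    have h3 : (a • x - b • y) i = a * x i - b * y i := rfl
    rw [h3, ← h1]
  have hAy : A y = b • x + a • y := by
    ext i
    have h1 := (hBre z i).2
    rw [hBz] at h1
    have h2 : (μ • z) i = μ * z i := rfl
    rw [h2, Complex.mul_im] at h1
    have h3 : (b • x + a • y) i = b * x i + a * y i := rfl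
    rw [h3, ← h1]
    simp only [hadef, hbdef, hxdef, hydef]
    ring
  have hsum2 : (inner ℝ (A x) x : ℝ) + inner ℝ (A y) y = a * (‖x‖^2 + ‖y‖^2) := by
    rw [hAx, hAy, inner_sub_left, inner_add_left, real_inner_smul_left,
      real_inner_smul_left, real_inner_smul_left, real_inner_smul_left,
      real_inner_self_eq_norm_sq, real_inner_self_eq_norm_sq,
      real_inner_comm y x]
    ring
  have hxy0 : x ≠ 0 ∨ y ≠ 0 := by
    by_contra h
    push_neg at h
    apply hz0
    funext i
    apply Complex.ext
    · exact congrFun (congrArg WithLp.ofLp h.1) i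
    · exact congrFun (congrArg WithLp.ofLp h.2) i
  have key : ∃ u : EuclideanSpace ℝ (Fin k), u ≠ 0 ∧ (inner ℝ (A u) u : ℝ) ≤ a * ‖u‖^2 := by
    by_contra h
    push_neg at h
    by_cases hx0 : x = 0
    · have hy0 : y ≠ 0 := hxy0.resolve_left (by simp [hx0])
      have h1 := h y hy0
      rw [hx0] at hsum2
      simp only [map_zero, inner_zero_right, norm_zero] at hsum2
      linarith [hsum2]
    · by_cases hy0 : y = 0
      · have h1 := h x hx0
        rw [hy0] at hsum2
        simp only [map_zero, inner_zero_right, norm_zero] at hsum2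
        linarith [hsum2]
      · have h1 := h x hx0
        have h2 := h y hy0
        linarith [hsum2]
  obtain ⟨u, hu0, huA⟩ := key
  have hnu : (0:ℝ) < ‖u‖ := norm_pos_iff.mpr hu0
  refine ⟨‖u‖⁻¹ • u, ?_, ?_⟩
  · rw [norm_smul, norm_inv, norm_norm, inv_mul_cancel₀ hnu.ne']
  · set v : EuclideanSpace ℝ (Fin k) := ‖u‖⁻¹ • u with hvdef
    have hv1 : ‖v‖ = 1 := by
      rw [hvdef, norm_smul, norm_inv, norm_norm, inv_mul_cancel₀ hnu.ne']
    have hip : (inner ℝ (A v) v : ℝ) ≤ a := by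
      rw [hvdef, map_smul, real_inner_smul_left, real_inner_smul_right]
      have hp : (0:ℝ) ≤ ‖u‖⁻¹ := by positivity
      have h1 : ‖u‖⁻¹ * (inner ℝ (A u) u : ℝ) ≤ ‖u‖⁻¹ * (a * ‖u‖^2) :=
        mul_le_mul_of_nonneg_left huA hp
      have h2 : ‖u‖⁻¹ * (‖u‖⁻¹ * (inner ℝ (A u) u : ℝ)) ≤ ‖u‖⁻¹ * (‖u‖⁻¹ * (a * ‖u‖^2)) :=
        mul_le_mul_of_nonneg_left h1 hp
      refine le_trans h2 (le_of_eq ?_)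
      field_simp
    have hs : ‖A v - v‖^2 = 2 - 2 * (inner ℝ (A v) v : ℝ) := by
      rw [norm_sub_sq_real, A.norm_map, hv1]
      ring
    have hcos2 : Real.cos (2 * (Real.pi / J)) = 1 - 2 * Real.sin (Real.pi / J)^2 := by
      rw [Real.cos_two_mul']
      linarith [Real.sin_sq_add_cos_sq (Real.pi / J)]
    have hsin0 : 0 ≤ Real.sin (Real.pi / J) := by
      apply Real.sin_nonneg_of_nonneg_of_le_pi (by positivity)
      rw [div_le_iff₀ hJpos]
      have h1J : (1:ℝ) ≤ (J:ℝ) := by exact_mod_cast Nat.one_le_iff_ne_zero.mpr (by omega)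
      exact le_mul_of_one_le_right hπ.le h1J
    have h4 : (2 * Real.sin (Real.pi / J))^2 ≤ ‖A v - v‖^2 := by
      rw [hs]
      have h5 : (inner ℝ (A v) v : ℝ) ≤ 1 - 2 * Real.sin (Real.pi / J)^2 := by
        rw [← hcos2]; exact le_trans hip hcos
      have h6 : (2 * Real.sin (Real.pi / J))^2 = 4 * Real.sin (Real.pi / J)^2 := by ring
      linarith
    calc 2 * Real.sin (Real.pi / J)
        = Real.sqrt ((2 * Real.sin (Real.pi / J))^2) := by
          rw [Real.sqrt_sq (by linarith : (0:ℝ) ≤ 2 * Real.sin (Real.pi / J))]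
      _ ≤ Real.sqrt (‖A v - v‖^2) := Real.sqrt_le_sqrt h4
      _ = ‖A v - v‖ := Real.sqrt_sq (norm_nonneg _)
end

section
/- Let A be a closed additive subgroup of Euclidean space ℝ^k. Then there exist natural numbers ℓ and d with ℓ + d ≤ k and an isomorphism of topological groups between A and ℝ^ℓ × ℤ^d. Moreover, the identity component of A equals the additive group of an ℓ-dimensional linear subspace V of ℝ^k, and A = V + D where D := A ∩ V^⊥ is a discrete subgroup of ℝ^k contained in the orthogonal complement V^⊥ of V. -/
open Module Submodule Metric

variable {k : ℕ}

/-- The maximal linear subspace contained in a closed additive subgroup. -/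
def lineSub (A : AddSubgroup (EuclideanSpace ℝ (Fin k))) :
    Submodule ℝ (EuclideanSpace ℝ (Fin k)) where
  carrier := {v | ∀ t : ℝ, t • v ∈ A}
  add_mem' := fun hu hv t => by simpa [smul_add] using A.add_mem (hu t) (hv t)
  zero_mem' := fun t => by simpa using A.zero_mem
  smul_mem' := fun c v hv t => by simpa [smul_smul] using hv (t * c)

lemma lineSub_le (A : AddSubgroup (EuclideanSpace ℝ (Fin k))) {v} (hv : v ∈ lineSub A) :
    v ∈ A := by simpa using hv 1

lemma exists_eps (A : AddSubgroup (EuclideanSpace ℝ (Fin k)))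
    (hA : IsClosed (A : Set (EuclideanSpace ℝ (Fin k)))) :
    ∃ ε > (0:ℝ), ∀ x ∈ A, x ∈ (lineSub A)ᗮ → ‖x‖ < ε → x = 0 := by
  by_contra h
  push_neg at h
  have hx : ∀ n : ℕ, ∃ x, x ∈ A ∧ x ∈ (lineSub A)ᗮ ∧ ‖x‖ < 1/(n+1) ∧ x ≠ 0 := by
    intro n
    obtain ⟨x, h1, h2, h3, h4⟩ := h (1/(n+1)) (by positivity)
    exact ⟨x, h1, h2, h3, h4⟩
  choose x hxA hxO hxn hx0 using hx
  set u : ℕ → EuclideanSpace ℝ (Fin k) := fun n => ‖x n‖⁻¹ • x n with hu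
  have hnorm : ∀ n, ‖x n‖ ≠ 0 := fun n => norm_ne_zero_iff.mpr (hx0 n)
  have husph : ∀ n, u n ∈ sphere (0 : EuclideanSpace ℝ (Fin k)) 1 := by
    intro n
    simp [hu, norm_smul, abs_of_nonneg (inv_nonneg.mpr (norm_nonneg _)),
      inv_mul_cancel₀ (hnorm n)]
  obtain ⟨c, hc, φ, hφ, hucv⟩ := (isCompact_sphere (0 : EuclideanSpace ℝ (Fin k)) 1).tendsto_subseq husph
  have hxcv : Filter.Tendsto (fun n => ‖x (φ n)‖) Filter.atTop (nhds 0) := by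
    have h1 : Filter.Tendsto (fun n : ℕ => 1/((n:ℝ)+1)) Filter.atTop (nhds 0) :=
      tendsto_one_div_add_atTop_nhds_zero_nat
    refine squeeze_zero (fun n => norm_nonneg _) (fun n => (hxn (φ n)).le.trans ?_) h1
    gcongr
    exact_mod_cast hφ.le_apply
  -- c lies in `lineSub A`
  have hcV : c ∈ lineSub A := by
    intro t
    have key : Filter.Tendsto (fun n => (⌊t / ‖x (φ n)‖⌋ : ℝ) • x (φ n))
        Filter.atTop (nhds (t • c)) := by
      have heq : ∀ n, (⌊t / ‖x (φ n)‖⌋ : ℝ) • x (φ n)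
          = ((⌊t / ‖x (φ n)‖⌋ : ℝ) * ‖x (φ n)‖) • u (φ n) := by
        intro n
        rw [hu]
        simp only [smul_smul]
        rw [mul_assoc, mul_inv_cancel₀ (hnorm (φ n)), mul_one]
      rw [show (fun n => (⌊t / ‖x (φ n)‖⌋ : ℝ) • x (φ n)) = fun n =>
          ((⌊t / ‖x (φ n)‖⌋ : ℝ) * ‖x (φ n)‖) • u (φ n) from funext heq]
      refine Filter.Tendsto.smul ?_ hucv
      -- scalar tends to t
      have hbd : ∀ n, |(⌊t / ‖x (φ n)‖⌋ : ℝ) * ‖x (φ n)‖ - t| ≤ ‖x (φ n)‖ := by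
        intro n
        have hpos : (0:ℝ) < ‖x (φ n)‖ := lt_of_le_of_ne (norm_nonneg _) (Ne.symm (hnorm (φ n)))
        rw [abs_le]
        constructor
        · have h1 : t / ‖x (φ n)‖ - 1 ≤ (⌊t / ‖x (φ n)‖⌋ : ℝ) := (Int.sub_one_lt_floor _).le
          have h1' := mul_le_mul_of_nonneg_right h1 hpos.le
          have ht : (t / ‖x (φ n)‖) * ‖x (φ n)‖ = t := div_mul_cancel₀ t (hnorm (φ n))
          nlinarith [h1', ht]
        · have h2 : (⌊t / ‖x (φ n)‖⌋ : ℝ) ≤ t / ‖x (φ n)‖ := Int.floor_le _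
          have h2' := mul_le_mul_of_nonneg_right h2 hpos.le
          have ht : (t / ‖x (φ n)‖) * ‖x (φ n)‖ = t := div_mul_cancel₀ t (hnorm (φ n))
          nlinarith [h2', ht, hpos]
      have : Filter.Tendsto (fun n => (⌊t / ‖x (φ n)‖⌋ : ℝ) * ‖x (φ n)‖ - t)
          Filter.atTop (nhds 0) := by
        refine squeeze_zero_norm (fun n => ?_) hxcv
        simpa using hbd n
      have := this.add_const t
      simpa using this
    refine hA.mem_of_tendsto key (Filter.Eventually.of_forall fun n => ?_)
    have : (⌊t / ‖x (φ n)‖⌋ : ℝ) • x (φ n) = ⌊t / ‖x (φ n)‖⌋ • x (φ n) :=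
      Int.cast_smul_eq_zsmul ℝ _ _
    rw [SetLike.mem_coe, this]
    exact AddSubgroup.zsmul_mem A (hxA (φ n)) _
  have hcO : c ∈ (lineSub A)ᗮ :=
    (lineSub A).isClosed_orthogonal.mem_of_tendsto hucv
      (Filter.Eventually.of_forall fun n =>
        Submodule.smul_mem _ _ (hxO (φ n)))
  have : c = 0 := by
    have := (Submodule.mem_orthogonal _ c).mp hcO c hcV
    exact inner_self_eq_zero.mp this
  rw [this] at hc
  simp at hc

lemma discrete_of_eps (G : AddSubgroup (EuclideanSpace ℝ (Fin k))) {ε : ℝ} (hε : 0 < ε)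
    (h : ∀ x ∈ G, ‖x‖ < ε → x = 0) : DiscreteTopology ↥G := by
  rw [discreteTopology_iff_isOpen_singleton_zero]
  have hset : ({(0 : ↥G)} : Set ↥G) = (Subtype.val) ⁻¹' (Metric.ball (0:EuclideanSpace ℝ (Fin k)) ε) := by
    ext x
    simp only [Set.mem_singleton_iff, Set.mem_preimage, Metric.mem_ball, dist_zero_right]
    constructor
    · rintro rfl; simpa using hε
    · intro hx
      exact Subtype.ext (h _ x.2 hx)
  rw [hset]
  exact Metric.isOpen_ball.preimage continuous_subtype_val

open Module in
lemma finrank_discrete_eq (L : Submodule ℤ (EuclideanSpace ℝ (Fin k))) [DiscreteTopology L] :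
    finrank ℤ L = finrank ℝ (Submodule.span ℝ (L : Set (EuclideanSpace ℝ (Fin k)))) := by
  set E := EuclideanSpace ℝ (Fin k)
  let W := Submodule.span ℝ (L : Set E)
  let f := W.subtype
  let L₀ := L.comap (f.restrictScalars ℤ)
  have h_img : f '' L₀ = L := by
    rw [← LinearMap.coe_restrictScalars ℤ f, ← Submodule.map_coe (f.restrictScalars ℤ),
      Submodule.map_comap_eq_self]
    exact fun x hx ↦ LinearMap.mem_range.mpr ⟨⟨x, Submodule.subset_span hx⟩, rfl⟩
  haveI : DiscreteTopology L₀ := by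
    refine DiscreteTopology.preimage_of_continuous_injective (L : Set E) ?_
      (Submodule.injective_subtype _)
    exact LinearMap.continuous_of_finiteDimensional f
  haveI : IsZLattice ℝ L₀ := ⟨by
    rw [← (Submodule.map_injective_of_injective (Submodule.injective_subtype _)).eq_iff,
      Submodule.map_span, Submodule.map_top, Submodule.range_subtype, h_img]⟩
  have hrk := ZLattice.rank ℝ L₀
  have hmap : L₀.map (f.restrictScalars ℤ) = L := SetLike.ext'_iff.mpr h_img
  have : finrank ℤ L₀ = finrank ℤ L := by
    rw [← hmap]
    exact (Submodule.equivMapOfInjective (f.restrictScalars ℤ)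
      (Submodule.injective_subtype _) L₀).finrank_eq
  rw [← this, hrk]

noncomputable def splitEquiv (A : AddSubgroup (EuclideanSpace ℝ (Fin k)))
    (V : Submodule ℝ (EuclideanSpace ℝ (Fin k))) (hVA : ∀ v ∈ V, v ∈ A) :
    ↥A ≃+ ↥V × ↥(A ⊓ Vᗮ.toAddSubgroup) where
  toFun a := (orthogonalProjection V ↑a,
    ⟨↑a - ↑(orthogonalProjection V ↑a),
      ⟨A.sub_mem a.2 (hVA _ (orthogonalProjection V ↑a).2),
        Submodule.mem_toAddSubgroup _ |>.mpr (Submodule.sub_starProjection_mem_orthogonal (K := V) (↑a))⟩⟩)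
  invFun vd := ⟨↑vd.1 + ↑vd.2, A.add_mem (hVA _ vd.1.2) vd.2.2.1⟩
  left_inv a := by
    ext
    simp
  right_inv vd := by
    have h2 : (↑vd.2 : EuclideanSpace ℝ (Fin k)) ∈ Vᗮ :=
      Submodule.mem_toAddSubgroup _ |>.mp vd.2.2.2
    have h1 : orthogonalProjection V (↑vd.1 + ↑vd.2) = vd.1 := by
      rw [map_add, orthogonalProjection_mem_subspace_eq_self,
        Submodule.orthogonalProjectionOnto_apply_of_mem_orthogonal h2, add_zero]
    refine Prod.ext h1 ?_
    ext
    simp [h1]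
  map_add' a b := by
    refine Prod.ext (by simp) ?_
    ext
    simp
    abel

lemma splitEquiv_continuous (A : AddSubgroup (EuclideanSpace ℝ (Fin k)))
    (V : Submodule ℝ (EuclideanSpace ℝ (Fin k))) (hVA : ∀ v ∈ V, v ∈ A) :
    Continuous (splitEquiv A V hVA) ∧ Continuous (splitEquiv A V hVA).symm := by
  constructor
  · refine Continuous.prodMk ?_ ?_
    · exact (orthogonalProjection V).continuous.comp continuous_subtype_val
    · refine Continuous.subtype_mk ?_ _
      exact continuous_subtype_val.sub (continuous_subtype_val.comp
        ((orthogonalProjection V).continuous.comp continuous_subtype_val))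
  · refine Continuous.subtype_mk ?_ _
    exact ((continuous_subtype_val.comp continuous_fst).add
      (continuous_subtype_val.comp continuous_snd))

lemma image_connComp (A : AddSubgroup (EuclideanSpace ℝ (Fin k)))
    (V : Submodule ℝ (EuclideanSpace ℝ (Fin k))) (hVA : ∀ v ∈ V, v ∈ A)
    {ε : ℝ} (hε : 0 < ε)
    (hsep : ∀ x ∈ A, x ∈ Vᗮ → ‖x‖ < ε → x = 0) :
    Subtype.val '' connectedComponent (0 : ↥A) = (V : Set (EuclideanSpace ℝ (Fin k))) := by
  apply Set.Subset.antisymm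
  · -- every element of the component lies in V
    rintro _ ⟨a, ha, rfl⟩
    let f : ↥A → EuclideanSpace ℝ (Fin k) := fun b => ↑b - ↑(orthogonalProjection V ↑b)
    have hf : Continuous f := continuous_subtype_val.sub (continuous_subtype_val.comp
      ((orthogonalProjection V).continuous.comp continuous_subtype_val))
    have hT : IsPreconnected (f '' connectedComponent (0 : ↥A)) :=
      (isPreconnected_connectedComponent).image f hf.continuousOn
    have hTD : ∀ y ∈ f '' connectedComponent (0 : ↥A), y ∈ A ∧ y ∈ Vᗮ := by
      rintro _ ⟨b, _, rfl⟩
      exact ⟨A.sub_mem b.2 (hVA _ (orthogonalProjection V ↑b).2),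
        Submodule.sub_starProjection_mem_orthogonal (K := V) (↑b)⟩
    have h0T : (0 : EuclideanSpace ℝ (Fin k)) ∈ f '' connectedComponent (0 : ↥A) := by
      refine ⟨0, mem_connectedComponent, ?_⟩
      simp [f]
    -- preconnected subset of a discrete set: it is {0}
    have hsub : ∀ y ∈ f '' connectedComponent (0 : ↥A), y = 0 := by
      set T := f '' connectedComponent (0 : ↥A)
      have hcover : T ⊆ Metric.ball 0 ε ∪ (Metric.closedBall 0 (ε/2))ᶜ := by
        intro y _
        by_cases hy : ‖y‖ < ε
        · exact Or.inl (by simpa [Metric.mem_ball, dist_zero_right] using hy)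
        · refine Or.inr ?_
          simp only [Set.mem_compl_iff, Metric.mem_closedBall, dist_zero_right, not_le]
          linarith [not_lt.mp hy, hε]
      have hW : ¬ (T ∩ (Metric.closedBall 0 (ε/2))ᶜ).Nonempty := by
        intro hne
        have := hT (Metric.ball 0 ε) (Metric.closedBall 0 (ε/2))ᶜ
          Metric.isOpen_ball (Metric.isClosed_closedBall.isOpen_compl) hcover
          ⟨0, h0T, by simpa [Metric.mem_ball] using hε⟩ hne
        obtain ⟨y, hyT, hy1, hy2⟩ := this
        have hy0 : y = 0 := hsep y (hTD y hyT).1 (hTD y hyT).2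
          (by simpa [Metric.mem_ball, dist_zero_right] using hy1)
        rw [hy0] at hy2
        simp only [Set.mem_compl_iff, Metric.mem_closedBall, dist_zero_right, norm_zero,
          not_le] at hy2
        linarith
      intro y hy
      have hyb : y ∈ Metric.closedBall 0 (ε/2) := by
        by_contra hc
        exact hW ⟨y, hy, hc⟩
      refine hsep y (hTD y hy).1 (hTD y hy).2 ?_
      have : ‖y‖ ≤ ε/2 := by simpa [Metric.mem_closedBall, dist_zero_right] using hyb
      linarith
    have := hsub (f a) ⟨a, ha, rfl⟩
    have heq : (↑a : EuclideanSpace ℝ (Fin k)) = ↑(orthogonalProjection V ↑a) :=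
      sub_eq_zero.mp this
    rw [SetLike.mem_coe, heq]
    exact (orthogonalProjection V ↑a).2
  · intro v hv
    refine ⟨⟨v, hVA v hv⟩, ?_, rfl⟩
    have hS : IsPreconnected {a : ↥A | (↑a : EuclideanSpace ℝ (Fin k)) ∈ V} := by
      rw [← Topology.IsInducing.subtypeVal.isPreconnected_image]
      have himg : Subtype.val '' {a : ↥A | (↑a : EuclideanSpace ℝ (Fin k)) ∈ V}
          = (V : Set (EuclideanSpace ℝ (Fin k))) := by
        apply Set.Subset.antisymm
        · rintro _ ⟨b, hb, rfl⟩; exact hb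
        · intro w hw; exact ⟨⟨w, hVA w hw⟩, hw, rfl⟩
      convert (V.convex).isPreconnected using 1
      exact himg

    exact hS.subset_connectedComponent (by simp [V.zero_mem]) hv

open Module in

/-- A closed additive subgroup `A` of `ℝ^k` is isomorphic, as a topological
group, to `ℝ^ℓ × ℤ^d` with `ℓ + d ≤ k`. Moreover, the identity component of `A` equals an
`ℓ`-dimensional linear subspace `V` of `ℝ^k`, and `A = V + D` where `D := A ∩ V^⊥` is a
discrete subgroup contained in the orthogonal complement of `V`. -/
theorem stmt_2 (k : ℕ) (A : AddSubgroup (EuclideanSpace ℝ (Fin k)))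
    (hA : IsClosed (A : Set (EuclideanSpace ℝ (Fin k)))) :
    ∃ (ℓ d : ℕ), ℓ + d ≤ k ∧
      ∃ V : Submodule ℝ (EuclideanSpace ℝ (Fin k)),
        Module.finrank ℝ V = ℓ ∧
        (∃ e : A ≃+ (EuclideanSpace ℝ (Fin ℓ) × (Fin d → ℤ)),
          Continuous e ∧ Continuous e.symm) ∧
        Subtype.val '' connectedComponent (0 : A) = (V : Set (EuclideanSpace ℝ (Fin k))) ∧
        DiscreteTopology ↥(A ⊓ Vᗮ.toAddSubgroup) ∧
        A = V.toAddSubgroup ⊔ (A ⊓ Vᗮ.toAddSubgroup) := by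
  classical
  set V := lineSub A with hV
  have hVA : ∀ v ∈ V, v ∈ A := fun v hv => lineSub_le A hv
  obtain ⟨ε, hε, hsep⟩ := exists_eps A hA
  set D := A ⊓ Vᗮ.toAddSubgroup with hDdef
  have hDmem : ∀ x ∈ D, x ∈ A ∧ x ∈ Vᗮ := by
    intro x hx
    rw [hDdef, AddSubgroup.mem_inf] at hx
    exact ⟨hx.1, (Submodule.mem_toAddSubgroup _).mp hx.2⟩
  haveI hDdisc : DiscreteTopology ↥D :=
    discrete_of_eps D hε (fun x hx hn => hsep x (hDmem x hx).1 (hDmem x hx).2 hn)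
  set L : Submodule ℤ (EuclideanSpace ℝ (Fin k)) := AddSubgroup.toIntSubmodule D with hL
  haveI hLdisc : DiscreteTopology ↥L := hDdisc
  set ℓ := finrank ℝ ↥V with hℓ
  set d := finrank ℤ ↥L with hd
  refine ⟨ℓ, d, ?_, V, rfl, ?_, ?_, hDdisc, ?_⟩
  · -- dimension count
    have h1 : d = finrank ℝ (Submodule.span ℝ (L : Set (EuclideanSpace ℝ (Fin k)))) :=
      finrank_discrete_eq L
    have h2 : Submodule.span ℝ (L : Set (EuclideanSpace ℝ (Fin k))) ≤ Vᗮ := by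
      rw [Submodule.span_le]
      intro x hx
      exact (hDmem x hx).2
    have h3 : finrank ℝ (Submodule.span ℝ (L : Set (EuclideanSpace ℝ (Fin k)))) ≤ finrank ℝ ↥Vᗮ :=
      Submodule.finrank_mono h2
    have h4 : finrank ℝ ↥V + finrank ℝ ↥Vᗮ = finrank ℝ (EuclideanSpace ℝ (Fin k)) :=
      V.finrank_add_finrank_orthogonal
    rw [finrank_euclideanSpace_fin] at h4
    omega
  · -- the isomorphism
    let e₀ := splitEquiv A V hVA
    obtain ⟨he₀, he₀s⟩ := splitEquiv_continuous A V hVA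
    let eV : ↥V ≃ₗᵢ[ℝ] EuclideanSpace ℝ (Fin ℓ) := (stdOrthonormalBasis ℝ ↥V).repr
    haveI : Module.Free ℤ ↥L := inferInstance
    haveI : Module.Finite ℤ ↥L := inferInstance
    let b : Basis (Fin d) ℤ ↥L := Module.finBasis ℤ ↥L
    let eDL : ↥D ≃+ ↥L :=
      { toFun := fun x => ⟨↑x, x.2⟩
        invFun := fun x => ⟨↑x, x.2⟩
        left_inv := fun _ => rfl
        right_inv := fun _ => rfl
        map_add' := fun _ _ => rfl }
    let eD : ↥D ≃+ (Fin d → ℤ) := eDL.trans b.equivFun.toAddEquiv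
    refine ⟨e₀.trans (AddEquiv.prodCongr eV.toLinearEquiv.toAddEquiv eD), ?_, ?_⟩
    · have hcoe : ⇑(e₀.trans (AddEquiv.prodCongr eV.toLinearEquiv.toAddEquiv eD))
          = (fun p : ↥V × ↥D => (eV p.1, eD p.2)) ∘ ⇑e₀ := rfl
      rw [hcoe]
      exact ((eV.continuous.comp continuous_fst).prodMk
        ((continuous_of_discreteTopology (f := ⇑eD)).comp continuous_snd)).comp he₀
    · have hcoe : ⇑(e₀.trans (AddEquiv.prodCongr eV.toLinearEquiv.toAddEquiv eD)).symm
          = ⇑e₀.symm ∘ (fun p : EuclideanSpace ℝ (Fin ℓ) × (Fin d → ℤ) =>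
            (eV.symm p.1, eD.symm p.2)) := rfl
      rw [hcoe]
      exact he₀s.comp ((eV.symm.continuous.comp continuous_fst).prodMk
        ((continuous_of_discreteTopology (f := ⇑eD.symm)).comp continuous_snd))
  · exact image_connComp A V hVA hε hsep
  · -- A = V ⊔ D
    apply le_antisymm
    · intro a ha
      have h1 : ↑(orthogonalProjection V a) ∈ V.toAddSubgroup := (orthogonalProjection V a).2
      have h2 : a - ↑(orthogonalProjection V a) ∈ D := by
        rw [hDdef, AddSubgroup.mem_inf]
        exact ⟨A.sub_mem ha (hVA _ (orthogonalProjection V a).2),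
          (Submodule.mem_toAddSubgroup _).mpr (Submodule.sub_starProjection_mem_orthogonal (K := V) a)⟩
      have : a = ↑(orthogonalProjection V a) + (a - ↑(orthogonalProjection V a)) := by abel
      rw [this]
      exact AddSubgroup.add_mem_sup h1 h2
    · refine sup_le ?_ inf_le_left
      intro v hv
      exact hVA v ((Submodule.mem_toAddSubgroup _).mp hv)
end

section
/- Let X be a metric space and G a group acting on X by isometries such that for every x ∈ X and every R > 0 the set Σ̄_R(G,x) := {g ∈ G : dist(x, g·x) ≤ R} is finite. Then for every x ∈ X and every r > 0 there exists an open neighborhood U of x such that Σ̄_r(G,y) ⊆ Σ̄_r(G,x) for every y ∈ U. -/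
private lemma key_ineq {X G : Type*} [MetricSpace X] [Group G] [MulAction G X]
    [IsIsometricSMul G X] (x y : X) (g : G) :
    dist x (g • x) ≤ 2 * dist x y + dist y (g • y) := by
  calc dist x (g • x) ≤ dist x y + dist y (g • y) + dist (g • y) (g • x) :=
        dist_triangle4 x y (g • y) (g • x)
    _ = dist x y + dist y (g • y) + dist y x := by rw [dist_smul]
    _ = 2 * dist x y + dist y (g • y) := by rw [dist_comm y x]; ring

/-- Let `G` act by isometries on a metric space `X` such that the sets
`Σ̄_R(G,x) = {g : dist x (g • x) ≤ R}` are finite for every `x` and every `R > 0`.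
Then for every `x` and `r > 0` there is an open neighborhood `U` of `x` such that
`Σ̄_r(G,y) ⊆ Σ̄_r(G,x)` for every `y ∈ U`. -/
theorem stmt_3 {X G : Type*} [MetricSpace X] [Group G] [MulAction G X] [IsIsometricSMul G X]
    (hfin : ∀ (x : X) (R : ℝ), 0 < R → {g : G | dist x (g • x) ≤ R}.Finite) :
    ∀ (x : X) (r : ℝ), 0 < r → ∃ U : Set X, IsOpen U ∧ x ∈ U ∧
      ∀ y ∈ U, {g : G | dist y (g • y) ≤ r} ⊆ {g : G | dist x (g • x) ≤ r} := by
  intro x r hr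
  set T : Set G := {g : G | dist x (g • x) ≤ r + 1 ∧ r < dist x (g • x)} with hT
  have hTfin : T.Finite := (hfin x (r + 1) (by linarith)).subset (fun g hg => hg.1)
  by_cases hTne : T.Nonempty
  · obtain ⟨g0, hg0, hmin⟩ := hTfin.toFinset.exists_min_image (fun g => dist x (g • x))
      (by rwa [← Set.Finite.toFinset_nonempty hTfin] at hTne)
    rw [Set.Finite.mem_toFinset] at hg0
    set ε := min (1/2 : ℝ) ((dist x (g0 • x) - r) / 2) with hε
    have hεpos : 0 < ε := by
      apply lt_min (by norm_num)
      have := hg0.2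
      linarith
    refine ⟨Metric.ball x ε, Metric.isOpen_ball, Metric.mem_ball_self hεpos, ?_⟩
    intro y hy g hg
    simp only [Set.mem_setOf_eq] at hg ⊢
    have hxy : dist x y < ε := by rwa [Metric.mem_ball, dist_comm] at hy
    have h1 : dist x (g • x) ≤ 2 * dist x y + dist y (g • y) := key_ineq x y g
    have h2 : dist x (g • x) < r + 2 * ε := by linarith
    by_contra hc
    push_neg at hc
    have hgT : g ∈ T := ⟨by
      have : ε ≤ 1/2 := min_le_left _ _
      linarith, hc⟩
    have := hmin g (hTfin.mem_toFinset.mpr hgT)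
    have hε2 : ε ≤ (dist x (g0 • x) - r) / 2 := min_le_right _ _
    linarith
  · refine ⟨Metric.ball x (1/2), Metric.isOpen_ball, Metric.mem_ball_self (by norm_num), ?_⟩
    intro y hy g hg
    simp only [Set.mem_setOf_eq] at hg ⊢
    have hxy : dist x y < 1/2 := by rwa [Metric.mem_ball, dist_comm] at hy
    have h1 : dist x (g • x) ≤ 2 * dist x y + dist y (g • y) := key_ineq x y g
    by_contra hc
    push_neg at hc
    exact hTne ⟨g, by linarith, hc⟩
end

section
/- Let X be a proper metric space, G a group acting on X by isometries, x₀ ∈ X and D ≥ 0 such that every point of X lies at distance at most D from the orbit G·x₀. Then for every r₀ > 0 there exists P₀ ∈ ℕ such that every closed ball of radius 3r₀ in X contains at most P₀ points which are pairwise at distance greater than 2r₀ (i.e. X is (P₀, r₀)-packed). -/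
/-- Let `X` be a proper metric space and `G` a group acting on `X` by
isometries, cocompactly: every point of `X` is at distance at most `D` from the orbit
`G • x₀`. Then for every `r₀ > 0` there is `P₀ ∈ ℕ` such that every closed ball of radius
`3r₀` contains at most `P₀` points which are pairwise at distance greater than `2r₀`,
i.e. `X` is `(P₀, r₀)`-packed. -/
theorem stmt_4 {X G : Type*} [MetricSpace X] [ProperSpace X]
    [Group G] [MulAction G X] [IsIsometricSMul G X]
    (x₀ : X) (D : ℝ) (hD : 0 ≤ D)
    (hcoc : ∀ y : X, ∃ g : G, dist y (g • x₀) ≤ D) :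
    ∀ r₀ : ℝ, 0 < r₀ → ∃ P₀ : ℕ,
      ∀ (x : X) (s : Finset X), (∀ y ∈ s, y ∈ Metric.closedBall x (3 * r₀)) →
        (∀ y ∈ s, ∀ z ∈ s, y ≠ z → 2 * r₀ < dist y z) → s.card ≤ P₀ := by
  intro r₀ hr₀
  classical
  have hK := (isCompact_closedBall x₀ (3 * r₀ + D)).totallyBounded
  rw [Metric.totallyBounded_iff] at hK
  obtain ⟨t, htfin, htcov⟩ := hK r₀ hr₀
  refine ⟨htfin.toFinset.card, ?_⟩
  intro x s hs hsep
  obtain ⟨g, hg⟩ := hcoc x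
  have hmem : ∀ y ∈ s, g⁻¹ • y ∈ ⋃ c ∈ t, Metric.ball c r₀ := by
    intro y hy
    apply htcov
    have h1 : dist y x ≤ 3 * r₀ := hs y hy
    have h2 : dist (g⁻¹ • y) x₀ = dist y (g • x₀) := by
      rw [← dist_smul g (g⁻¹ • y) x₀, smul_inv_smul]
    simp only [Metric.mem_closedBall, h2]
    calc dist y (g • x₀) ≤ dist y x + dist x (g • x₀) := dist_triangle _ _ _
      _ ≤ 3 * r₀ + D := add_le_add h1 hg
  have hchoice : ∀ y ∈ s, ∃ c ∈ t, g⁻¹ • y ∈ Metric.ball c r₀ := by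
    intro y hy
    simpa using hmem y hy
  choose f hf1 hf2 using hchoice
  have : ∀ y (hy : y ∈ s), f y hy ∈ htfin.toFinset := by
    intro y hy; simpa using hf1 y hy
  refine Finset.card_le_card_of_injOn (fun y => if hy : y ∈ s then f y hy else x₀)
    (fun y hy => by beta_reduce; rw [dif_pos (Finset.mem_coe.mp hy)]; simpa using hf1 y (Finset.mem_coe.mp hy)) ?_
  intro y hy z hz hfz
  simp only [Finset.mem_coe] at hy hz
  by_contra hne
  have hlt := hsep y hy z hz hne
  simp only [] at hfz; rw [dif_pos hy, dif_pos hz] at hfz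
  have d1 : dist (g⁻¹ • y) (f y hy) < r₀ := hf2 y hy
  have d2 : dist (g⁻¹ • z) (f z hz) < r₀ := hf2 z hz
  have : dist (g⁻¹ • y) (g⁻¹ • z) < 2 * r₀ := by
    calc dist (g⁻¹ • y) (g⁻¹ • z) ≤ dist (g⁻¹ • y) (f y hy) + dist (f y hy) (g⁻¹ • z) :=
          dist_triangle _ _ _
      _ < r₀ + r₀ := add_lt_add d1 (by rw [hfz, dist_comm]; exact d2)
      _ = 2 * r₀ := by ring
  rw [dist_smul] at this
  linarith
end

section
/- Let X and X' be metric spaces, Γ a group acting by isometries on X, Γ' a group acting by isometries on X', and x ∈ X, x' ∈ X' basepoints. Let s₀ > 0 satisfy dist(x', g'·x') ≥ s₀ for every g' ∈ Γ' with g' ≠ 1. Let ε > 0 with 3ε ≤ s₀, let L > 0 with 3L ≤ 1/ε, set R := 1/ε. Suppose f : X → X' satisfies f(x) = x', and φ : Σ̄_R(Γ,x) → Σ̄_R(Γ',x') satisfies dist(f(g·y), φ(g)·f(y)) < ε for every g ∈ Σ̄_R(Γ,x) and every y ∈ B̄(x,R) with g·y ∈ B̄(x,R). Then for all s₁, s₂,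 s₃ ∈ Σ̄_L(Γ,x) one has φ(s₁·s₂·s₃) = φ(s₁)·φ(s₂)·φ(s₃) (all the elements s₁·s₂·s₃, s₂·s₃, s₁, s₂, s₃ lie in Σ̄_R(Γ,x) since 3L ≤ R, so both sides are defined). -/
/-- Under the systole bound on `(Γ',x')`, `3ε ≤ s₀`, `3L ≤ 1/ε = R`, the
approximation map `φ : Σ̄_R(Γ,x) → Σ̄_R(Γ',x')` of an equivariant `ε`-approximation is
multiplicative on triples of elements of `Σ̄_L(Γ,x)`:
`φ(s₁s₂s₃) = φ(s₁)φ(s₂)φ(s₃)`. -/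
theorem stmt_6 {X X' Γ Γ' : Type*} [MetricSpace X] [MetricSpace X']
    [Group Γ] [Group Γ'] [MulAction Γ X] [IsIsometricSMul Γ X]
    [MulAction Γ' X'] [IsIsometricSMul Γ' X']
    (x : X) (x' : X') (s₀ : ℝ) (hs₀ : 0 < s₀)
    (hsys' : ∀ g' : Γ', g' ≠ 1 → s₀ ≤ dist x' (g' • x'))
    (ε : ℝ) (hε : 0 < ε) (hεs₀ : 3 * ε ≤ s₀)
    (L : ℝ) (hL : 0 < L) (R : ℝ) (hR : R = 1 / ε) (hLR : 3 * L ≤ R)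
    (f : X → X') (φ : Γ → Γ')
    (hfx : f x = x')
    (hφmem : Set.MapsTo φ {g : Γ | dist x (g • x) ≤ R} {g' : Γ' | dist x' (g' • x') ≤ R})
    (hφ : ∀ g ∈ {g : Γ | dist x (g • x) ≤ R}, ∀ y ∈ Metric.closedBall x R,
      g • y ∈ Metric.closedBall x R → dist (f (g • y)) (φ g • f y) < ε) :
    ∀ s₁ ∈ {g : Γ | dist x (g • x) ≤ L}, ∀ s₂ ∈ {g : Γ | dist x (g • x) ≤ L},
      ∀ s₃ ∈ {g : Γ | dist x (g • x) ≤ L},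
        φ (s₁ * s₂ * s₃) = φ s₁ * φ s₂ * φ s₃ := by
  intro s₁ hs₁ s₂ hs₂ s₃ hs₃
  simp only [Set.mem_setOf_eq] at hs₁ hs₂ hs₃
  have hR0 : 0 < R := by rw [hR]; positivity
  -- key lemma: multiplicativity on pairs with all data in the R-ball
  have key : ∀ a b : Γ, dist x ((a * b) • x) ≤ R → dist x (a • x) ≤ R →
      dist x (b • x) ≤ R → φ (a * b) = φ a * φ b := by
    intro a b hab ha hb
    have hxball : x ∈ Metric.closedBall x R := by
      simp [hR0.le]
    have h1 : dist (f ((a * b) • x)) (φ (a * b) • x') < ε := by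
      have := hφ (a * b) hab x hxball (by simpa [Metric.mem_closedBall, dist_comm] using hab)
      rwa [hfx] at this
    have h2 : dist (f ((a * b) • x)) (φ a • f (b • x)) < ε := by
      have := hφ a ha (b • x) (by simpa [Metric.mem_closedBall, dist_comm] using hb)
        (by simpa [Metric.mem_closedBall, dist_comm, smul_smul] using hab)
      rwa [smul_smul] at this
    have h3 : dist (f (b • x)) (φ b • x') < ε := by
      have := hφ b hb x hxball (by simpa [Metric.mem_closedBall, dist_comm] using hb)
      rwa [hfx] at this
    have h1' : dist (φ (a * b) • x') (f ((a * b) • x)) < ε := by rwa [dist_comm] at h1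
    have h3' : dist (φ a • f (b • x)) ((φ a * φ b) • x') < ε := by
      rwa [← smul_smul, dist_smul]
    have htri : dist (φ (a * b) • x') ((φ a * φ b) • x')
        ≤ dist (φ (a * b) • x') (f ((a * b) • x)) +
          dist (f ((a * b) • x)) (φ a • f (b • x)) +
          dist (φ a • f (b • x)) ((φ a * φ b) • x') := dist_triangle4 _ _ _ _
    have hmain : dist (φ (a * b) • x') ((φ a * φ b) • x') < 3 * ε := by linarith
    by_contra hne
    have hne' : (φ (a * b))⁻¹ * (φ a * φ b) ≠ 1 := by
      intro h
      exact hne (inv_mul_eq_one.mp h)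
    have := hsys' _ hne'
    rw [show dist x' (((φ (a * b))⁻¹ * (φ a * φ b)) • x')
        = dist (φ (a * b) • x') ((φ a * φ b) • x') by
      rw [← dist_smul (φ (a * b)) x' _, smul_smul, mul_inv_cancel_left]] at this
    linarith
  have d23 : dist x ((s₂ * s₃) • x) ≤ 2 * L := by
    calc dist x ((s₂ * s₃) • x) ≤ dist x (s₂ • x) + dist (s₂ • x) ((s₂ * s₃) • x) :=
          dist_triangle _ _ _
      _ ≤ L + L := by
          refine add_le_add hs₂ ?_
          rw [← smul_smul, dist_smul]; exact hs₃
      _ = 2 * L := by ring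
  have d123 : dist x ((s₁ * s₂ * s₃) • x) ≤ 3 * L := by
    calc dist x ((s₁ * s₂ * s₃) • x)
        ≤ dist x (s₁ • x) + dist (s₁ • x) ((s₁ * s₂ * s₃) • x) := dist_triangle _ _ _
      _ ≤ L + 2 * L := by
          refine add_le_add hs₁ ?_
          rw [mul_assoc, ← smul_smul, dist_smul]; exact d23
      _ = 3 * L := by ring
  have hLR' : L ≤ R := by linarith
  have h2LR : 2 * L ≤ R := by linarith
  rw [mul_assoc, key s₁ (s₂ * s₃) (by rw [← mul_assoc]; linarith) (hs₁.trans hLR')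
      (d23.trans h2LR), key s₂ s₃ (d23.trans h2LR) (hs₂.trans hLR') (hs₃.trans hLR'),
    mul_assoc]
end

section
/- Let Γ and Γ' be groups and S a generating subset of Γ with 1 ∈ S. Suppose that the kernel of the canonical epimorphism from the free group F(S) on the set S onto Γ is the normal closure of a set of elements, each of which is a word of the form s₁·s₂·s₃ with s₁, s₂, s₃ ∈ S (viewed as free-group letters). Let T ⊆ Γ be a subset containing every product s₁·s₂·s₃ of three elements of S, and let φ : T → Γ' be a map satisfying φ(1) = 1 and φ(s₁·s₂·s₃) = φ(s₁)·φ(s₂)·φ(s₃) for all s₁, s₂, s₃ ∈ S. Then there exists a unique group homomorphism φ̃ : Γ → Γ' with φ̃(s) = φ(s) for every s ∈ S. -/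
/-- Let `S` be a generating set of `Γ` containing `1`, such that the kernel
of the canonical epimorphism `F(S) → Γ` is the normal closure of a set of words of the
form `s₁·s₂·s₃` with `sᵢ ∈ S`. If `T ⊆ Γ` contains all products of three elements of `S`
and `φ : T → Γ'` satisfies `φ(1) = 1` and `φ(s₁s₂s₃) = φ(s₁)φ(s₂)φ(s₃)` for all
`s₁,s₂,s₃ ∈ S`, then there is a unique group homomorphism `φ̃ : Γ → Γ'` with
`φ̃(s) = φ(s)` for all `s ∈ S`. -/
theorem stmt_7 {Γ Γ' : Type*} [Group Γ] [Group Γ'] (S : Set Γ)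
    (hgen : Subgroup.closure S = ⊤) (hone : (1 : Γ) ∈ S)
    (W : Set (FreeGroup S))
    (hW : ∀ w ∈ W, ∃ s₁ s₂ s₃ : S, w = FreeGroup.of s₁ * FreeGroup.of s₂ * FreeGroup.of s₃)
    (hker : (FreeGroup.lift (fun s : S => (s : Γ))).ker = Subgroup.normalClosure W)
    (T : Set Γ) (hT : ∀ s₁ ∈ S, ∀ s₂ ∈ S, ∀ s₃ ∈ S, s₁ * s₂ * s₃ ∈ T)
    (φ : Γ → Γ') (hφ1 : φ 1 = 1)
    (hφ : ∀ s₁ ∈ S, ∀ s₂ ∈ S, ∀ s₃ ∈ S, φ (s₁ * s₂ * s₃) = φ s₁ * φ s₂ * φ s₃) :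
    ∃! φt : Γ →* Γ', ∀ s ∈ S, φt s = φ s := by
  set π : FreeGroup S →* Γ := FreeGroup.lift (fun s : S => (s : Γ)) with hπ
  have hπsurj : Function.Surjective π := by
    rw [← MonoidHom.range_eq_top, hπ, FreeGroup.range_lift_eq_closure,
      Subtype.range_coe, hgen]
  set ψ : FreeGroup S →* Γ' := FreeGroup.lift (fun s : S => φ (s : Γ)) with hψ
  have hle : π.ker ≤ ψ.ker := by
    rw [hπ, hker]
    refine Subgroup.normalClosure_le_normal ?_
    intro w hw
    obtain ⟨s₁, s₂, s₃, rfl⟩ := hW w hw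
    have hmem : FreeGroup.of s₁ * FreeGroup.of s₂ * FreeGroup.of s₃ ∈ π.ker := by
      rw [hπ, hker]; exact Subgroup.subset_normalClosure hw
    have h1 : (s₁ : Γ) * s₂ * s₃ = 1 := by
      simpa [hπ] using hmem
    have : ψ (FreeGroup.of s₁ * FreeGroup.of s₂ * FreeGroup.of s₃) = 1 := by
      simp only [hψ, map_mul, FreeGroup.lift_apply_of]
      rw [← hφ s₁ s₁.2 s₂ s₂.2 s₃ s₃.2, h1, hφ1]
    exact this
  -- lift to Γ
  let e := QuotientGroup.quotientKerEquivOfSurjective π hπsurj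
  let ψ' : FreeGroup S ⧸ π.ker →* Γ' := QuotientGroup.lift π.ker ψ hle
  let φt : Γ →* Γ' := ψ'.comp (e.symm : Γ →* FreeGroup S ⧸ π.ker)
  have hφt : ∀ x : FreeGroup S, φt (π x) = ψ x := by
    intro x
    have : e.symm (π x) = QuotientGroup.mk x := by
      apply e.injective
      simp only [e, MulEquiv.apply_symm_apply]
      rfl
    simp [φt, this, ψ']
  have key : ∀ s ∈ S, φt s = φ s := by
    intro s hs
    have := hφt (FreeGroup.of ⟨s, hs⟩)
    simpa [hπ, hψ] using this
  refine ⟨φt, key, ?_⟩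
  intro g hg
  ext x
  have : ∀ y ∈ Subgroup.closure S, g y = φt y := by
    intro y hy
    induction hy using Subgroup.closure_induction with
    | mem z hz => rw [hg z hz, key z hz]
    | one => simp
    | mul a b _ _ ha hb => simp [ha, hb]
    | inv a _ ha => simp [ha]
  exact this x (by rw [hgen]; trivial)
end

section
/- Let X be a geodesic metric space and X' a metric space; let Γ act by isometries on X and Γ' act by isometries on X', with basepoints x ∈ X, x' ∈ X'. Let D₀ ≥ 0 be such that every point of X lies at distance at most D₀ from the orbit Γ·x, let ε ≥ 0, and let L ≥ 8·D₀ with L > 0. Let φ̃ : Γ → Γ' be a group homomorphism such that dist(x', φ̃(h)·x') ≤ dist(x, h·x) + 2ε for every h ∈ Γ with dist(x, h·x) ≤ L. Then for every g ∈ Γ with dist(x, g·x) ≥ L one has dist(x', φ̃(g)·x') ≤ dist(x, g·x)·(1 + 4(D₀+ε)/L) + 2(D₀+ε). -/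
/-- Let `X` be a geodesic metric space on which `Γ` acts by isometries with
`dist(y, Γ•x) ≤ D₀` for all `y`, and let `Γ'` act by isometries on `X'`. Let `ε ≥ 0` and
`L ≥ 8D₀`, `L > 0`. If a homomorphism `φ̃ : Γ → Γ'` satisfies
`dist(x', φ̃(h)•x') ≤ dist(x, h•x) + 2ε` for every `h` with `dist(x, h•x) ≤ L`, then for
every `g` with `dist(x, g•x) ≥ L` one has
`dist(x', φ̃(g)•x') ≤ dist(x, g•x)·(1 + 4(D₀+ε)/L) + 2(D₀+ε)`. -/
theorem stmt_8 {X X' Γ Γ' : Type*} [MetricSpace X] [MetricSpace X']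
    [Group Γ] [Group Γ'] [MulAction Γ X] [IsIsometricSMul Γ X]
    [MulAction Γ' X'] [IsIsometricSMul Γ' X']
    (hgeo : ∀ y z : X, ∃ c : ℝ → X, c 0 = y ∧ c (dist y z) = z ∧
      ∀ s ∈ Set.Icc (0 : ℝ) (dist y z), ∀ t ∈ Set.Icc (0 : ℝ) (dist y z),
        dist (c s) (c t) = |s - t|)
    (x : X) (x' : X') (D₀ : ℝ) (hD₀ : 0 ≤ D₀)
    (hcoc : ∀ y : X, ∃ g : Γ, dist y (g • x) ≤ D₀)
    (ε : ℝ) (hε : 0 ≤ ε) (L : ℝ) (hL : 8 * D₀ ≤ L) (hL0 : 0 < L)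
    (φt : Γ →* Γ')
    (hshort : ∀ h : Γ, dist x (h • x) ≤ L →
      dist x' (φt h • x') ≤ dist x (h • x) + 2 * ε) :
    ∀ g : Γ, L ≤ dist x (g • x) →
      dist x' (φt g • x') ≤ dist x (g • x) * (1 + 4 * (D₀ + ε) / L) + 2 * (D₀ + ε) := by
  intro g hg
  set d := dist x (g • x) with hd
  have hd0 : 0 < d := lt_of_lt_of_le hL0 hg
  obtain ⟨c, hc0, hcd, hiso⟩ := hgeo x (g • x)
  set n : ℕ := ⌈2 * d / L⌉₊ with hn
  have hn2 : (2 : ℝ) ≤ n := by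
    have h2 : (2 : ℝ) ≤ 2 * d / L := by
      rw [le_div_iff₀ hL0]; nlinarith
    exact le_trans h2 (Nat.le_ceil _)
  have hnpos : 0 < (n : ℝ) := by linarith
  have hnne : (n : ℝ) ≠ 0 := ne_of_gt hnpos
  have hnle : (n : ℝ) ≤ 2 * d / L + 1 := by
    have := Nat.ceil_lt_add_one (by positivity : (0:ℝ) ≤ 2 * d / L)
    exact le_of_lt this
  have hdn : d / n ≤ L / 2 := by
    rw [div_le_div_iff₀ hnpos (by norm_num : (0:ℝ) < 2)]
    have : 2 * d / L ≤ (n : ℝ) := Nat.le_ceil _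
    rw [div_le_iff₀ hL0] at this
    linarith
  -- choice of group elements
  classical
  set γ : ℕ → Γ := fun i => if i = 0 then 1 else if i = n then g
    else Classical.choose (hcoc (c ((i : ℝ) * d / n))) with hγ
  have hmem : ∀ i : ℕ, i ≤ n → (i : ℝ) * d / n ∈ Set.Icc (0:ℝ) d := by
    intro i hi
    constructor
    · positivity
    · rw [div_le_iff₀ hnpos]
      have : (i : ℝ) ≤ n := by exact_mod_cast hi
      nlinarith
  have hnear : ∀ i : ℕ, i ≤ n → dist (c ((i : ℝ) * d / n)) (γ i • x) ≤ D₀ := by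
    intro i hi
    by_cases h0 : i = 0
    · subst h0
      simp only [hγ, if_pos rfl, one_smul]
      simp only [Nat.cast_zero, zero_mul, zero_div, hc0, dist_self]
      exact hD₀
    by_cases hN : i = n
    · subst hN
      have hγn : γ n = g := by simp [hγ, h0]
      rw [hγn]
      have h' : (n : ℝ) * d / n = d := by
        rw [mul_comm, mul_div_assoc, div_self hnne, mul_one]
      rw [h', hcd, dist_self]
      exact hD₀
    · simp only [hγ, if_neg h0, if_neg hN]
      exact Classical.choose_spec (hcoc (c ((i : ℝ) * d / n)))
  have hstep : ∀ i : ℕ, i < n → dist (γ i • x) (γ (i+1) • x) ≤ d / n + 2 * D₀ := by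
    intro i hi
    have h1 : dist (c ((i : ℝ) * d / n)) (c (((i:ℕ)+1 : ℝ) * d / n)) = d / n := by
      rw [hiso _ (hmem i (le_of_lt hi)) _ (by exact_mod_cast hmem (i+1) hi)]
      have : (i : ℝ) * d / n - ((i:ℕ)+1 : ℝ) * d / n = -(d / n) := by ring
      rw [this, abs_neg, abs_of_nonneg (by positivity)]
    calc dist (γ i • x) (γ (i+1) • x)
        ≤ dist (γ i • x) (c ((i : ℝ) * d / n)) + dist (c ((i : ℝ) * d / n)) (γ (i+1) • x) :=
          dist_triangle _ _ _
      _ ≤ dist (γ i • x) (c ((i : ℝ) * d / n)) +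
          (dist (c ((i : ℝ) * d / n)) (c (((i:ℕ)+1 : ℝ) * d / n)) +
            dist (c (((i:ℕ)+1 : ℝ) * d / n)) (γ (i+1) • x)) := by
          gcongr; exact dist_triangle _ _ _
      _ ≤ D₀ + (d / n + D₀) := by
          have ha := hnear i (le_of_lt hi)
          have hb := hnear (i+1) hi
          rw [dist_comm] at ha
          push_cast at hb ⊢
          rw [h1]
          push_cast
          gcongr
      _ = d / n + 2 * D₀ := by ring
  have key : ∀ i : ℕ, i ≤ n → dist x' (φt (γ i) • x') ≤ i * (d / n + 2 * D₀ + 2 * ε) := by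
    intro i
    induction i with
    | zero =>
      intro _
      simp only [hγ, if_pos rfl, map_one, one_smul, dist_self, Nat.cast_zero, zero_mul, le_refl]
    | succ i ih =>
      intro hi
      have hi' : i < n := hi
      have h2 : dist (φt (γ i) • x') (φt (γ (i+1)) • x') =
          dist x' (φt ((γ i)⁻¹ * γ (i+1)) • x') := by
        have : φt (γ (i+1)) = φt (γ i) * φt ((γ i)⁻¹ * γ (i+1)) := by
          rw [← map_mul]; group
        rw [this, mul_smul, dist_smul]
      have h3 : dist x ((((γ i)⁻¹ * γ (i+1)) : Γ) • x) = dist (γ i • x) (γ (i+1) • x) := by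
        rw [mul_smul, ← dist_smul (γ i) x, smul_inv_smul]
      have h4 : dist x ((((γ i)⁻¹ * γ (i+1)) : Γ) • x) ≤ L := by
        rw [h3]
        calc dist (γ i • x) (γ (i+1) • x) ≤ d / n + 2 * D₀ := hstep i hi'
          _ ≤ L / 2 + L / 4 := by linarith [hdn, hL]
          _ ≤ L := by linarith
      have h5 := hshort _ h4
      rw [h3] at h5
      calc dist x' (φt (γ (i+1)) • x')
          ≤ dist x' (φt (γ i) • x') + dist (φt (γ i) • x') (φt (γ (i+1)) • x') :=
            dist_triangle _ _ _
        _ ≤ i * (d / n + 2 * D₀ + 2 * ε) + (d / n + 2 * D₀ + 2 * ε) := by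
            have := le_trans h5 (by linarith [hstep i hi'] : dist (γ i • x) (γ (i+1) • x) + 2 * ε ≤ d / n + 2 * D₀ + 2 * ε)
            rw [h2]
            gcongr
            exact ih (le_of_lt hi')
        _ = (i + 1 : ℕ) * (d / n + 2 * D₀ + 2 * ε) := by push_cast; ring
  have hfin := key n le_rfl
  have hn0 : n ≠ 0 := by
    intro h
    rw [h] at hn2
    norm_num at hn2
  have hγn : γ n = g := by simp [hγ, hn0]
  rw [hγn] at hfin
  have hndn : (n : ℝ) * (d / n) = d := by field_simp
  have hdnn : 0 ≤ d / n + 2 * D₀ + 2 * ε := by positivity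
  calc dist x' (φt g • x')
      ≤ n * (d / n + 2 * D₀ + 2 * ε) := hfin
    _ = d + n * (2 * (D₀ + ε)) := by rw [mul_add, mul_add, hndn]; ring
    _ ≤ d + (2 * d / L + 1) * (2 * (D₀ + ε)) := by gcongr <;> positivity
    _ = d * (1 + 4 * (D₀ + ε) / L) + 2 * (D₀ + ε) := by field_simp; try ring
end

section
/- Let X and X' be metric spaces, Γ and Γ' groups acting by isometries on X and X' respectively, and x ∈ X, x' ∈ X' basepoints. For R ≥ 0 set N(R) := #{g ∈ Γ : dist(x, g·x) ≤ R} and N'(R) := #{g' ∈ Γ' : dist(x', g'·x') ≤ R}, and assume both sets are finite for every R ≥ 0. Define Ent(Γ,x) := limsup_{R→∞} (1/R)·log N(R) and Ent(Γ',x') := limsup_{R→∞} (1/R)·log N'(R). Suppose there exist an injective map θ : Γ → Γ' and constants a ≥ 1, C ≥ 0, L ≥ 0 such that dist(x', θ(g)·x') ≤ a·dist(x, g·x) + C for every g ∈ Γ with dist(x, g·x) ≥ L. Then Ent(Γ,x) ≤ a·Ent(Γ',x'). -/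
open Filter

/-- The orbit-counting entropy of the action of `G` on `X` at the basepoint `x`:
`Ent(G,x) = limsup_{R→∞} (1/R)·log #{g : dist(x, g•x) ≤ R}` (as an extended real). -/
noncomputable def orbitEntropy (G : Type*) {X : Type*} [Group G] [MetricSpace X]
    [MulAction G X] (x : X) : EReal :=
  limsup (fun R : ℝ => ((Real.log ({g : G | dist x (g • x) ≤ R}.ncard) / R : ℝ) : EReal))
    atTop

/-- If all orbital counting sets are finite and there are an injective map
`θ : Γ → Γ'` and constants `a ≥ 1`, `C ≥ 0`, `L ≥ 0` with
`dist(x', θ(g)•x') ≤ a·dist(x, g•x) + C` whenever `dist(x, g•x) ≥ L`, then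
`Ent(Γ,x) ≤ a·Ent(Γ',x')`. -/
theorem stmt_9 {X X' Γ Γ' : Type*} [MetricSpace X] [MetricSpace X']
    [Group Γ] [Group Γ'] [MulAction Γ X] [IsIsometricSMul Γ X]
    [MulAction Γ' X'] [IsIsometricSMul Γ' X']
    (x : X) (x' : X')
    (hfin : ∀ R : ℝ, 0 ≤ R → {g : Γ | dist x (g • x) ≤ R}.Finite)
    (hfin' : ∀ R : ℝ, 0 ≤ R → {g' : Γ' | dist x' (g' • x') ≤ R}.Finite)
    (θ : Γ → Γ') (hθ : Function.Injective θ)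
    (a C L : ℝ) (ha : 1 ≤ a) (hC : 0 ≤ C) (hL : 0 ≤ L)
    (hcomp : ∀ g : Γ, L ≤ dist x (g • x) → dist x' (θ g • x') ≤ a * dist x (g • x) + C) :
    orbitEntropy Γ x ≤ (a : EReal) * orbitEntropy Γ' x' := by
  have ha0 : (0:ℝ) < a := lt_of_lt_of_le one_pos ha
  set S : ℝ → Set Γ := fun R => {g : Γ | dist x (g • x) ≤ R} with hSdef
  set S' : ℝ → Set Γ' := fun R => {g' : Γ' | dist x' (g' • x') ≤ R} with hS'def
  set N : ℝ → ℝ := fun R => ((S R).ncard : ℝ) with hNdef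
  set N' : ℝ → ℝ := fun R => ((S' R).ncard : ℝ) with hN'def
  set T : EReal := orbitEntropy Γ' x' with hTdef
  -- each counting function is at least 1 on nonnegative radii
  have hN1 : ∀ R : ℝ, 0 ≤ R → 1 ≤ N R := by
    intro R hR
    have hpos : 0 < (S R).ncard := by
      rw [Set.ncard_pos (hfin R hR)]
      exact ⟨1, by simp [hSdef, hR]⟩
    show (1:ℝ) ≤ ((S R).ncard : ℝ)
    exact_mod_cast hpos
  have hN'1 : ∀ R : ℝ, 0 ≤ R → 1 ≤ N' R := by
    intro R hR
    have hpos : 0 < (S' R).ncard := by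
      rw [Set.ncard_pos (hfin' R hR)]
      exact ⟨1, by simp [hS'def, hR]⟩
    show (1:ℝ) ≤ ((S' R).ncard : ℝ)
    exact_mod_cast hpos
  -- T is nonnegative
  have hT0 : (0:EReal) ≤ T := by
    have hev : ∀ᶠ R : ℝ in atTop,
        (0:EReal) ≤ ((Real.log ((S' R).ncard) / R : ℝ) : EReal) := by
      filter_upwards [eventually_ge_atTop (1:ℝ)] with R hR
      have hR0 : (0:ℝ) < R := lt_of_lt_of_le one_pos hR
      have h1 : (0:ℝ) ≤ Real.log ((S' R).ncard) := Real.log_nonneg (hN'1 R hR0.le)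
      have : (0:ℝ) ≤ Real.log ((S' R).ncard) / R := div_nonneg h1 hR0.le
      exact_mod_cast this
    calc (0:EReal) = limsup (fun _ : ℝ => (0:EReal)) atTop := (limsup_const 0).symm
      _ ≤ T := limsup_le_limsup hev
  -- the key step: for every real c above a*T, the entropy of Γ is at most c
  have key : ∀ c : ℝ, (a:EReal) * T < (c:EReal) → orbitEntropy Γ x ≤ (c:EReal) := by
    intro c hc
    -- T is finite
    have hTtop : T ≠ ⊤ := by
      intro h
      rw [h, EReal.coe_mul_top_of_pos ha0] at hc
      exact (not_top_lt hc)
    have hTbot : T ≠ ⊥ := fun h => by simp [h] at hT0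
    set E : ℝ := T.toReal with hEdef
    have hTE : T = (E : EReal) := (EReal.coe_toReal hTtop hTbot).symm
    have hE0 : (0:ℝ) ≤ E := by
      rw [hTE] at hT0; exact_mod_cast hT0
    have haE : a * E < c := by
      rw [hTE, ← EReal.coe_mul] at hc; exact_mod_cast hc
    set ε : ℝ := (c - a * E) / (2 * a) with hεdef
    have hε : 0 < ε := div_pos (by linarith) (by linarith)
    have hkey : a * (E + ε) < c := by
      have : a * ε = (c - a * E) / 2 := by
        rw [hεdef, mul_div_assoc', mul_comm 2 a, mul_div_mul_left _ _ ha0.ne']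
      nlinarith
    have hEε0 : (0:ℝ) ≤ E + ε := by linarith
    -- eventually log N'(S) ≤ (E+ε) S
    have hlt : T < ((E + ε : ℝ) : EReal) := by
      rw [hTE]; exact_mod_cast (lt_add_of_pos_right E hε)
    have hev' : ∀ᶠ R : ℝ in atTop,
        ((Real.log ((S' R).ncard) / R : ℝ) : EReal) < ((E + ε : ℝ) : EReal) :=
      eventually_lt_of_limsup_lt hlt
    obtain ⟨S₀, hS₀⟩ := (hev'.and (eventually_ge_atTop (1:ℝ))).exists_forall_of_atTop
    have hlog' : ∀ R : ℝ, S₀ ≤ R → Real.log (N' R) ≤ (E + ε) * R := by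
      intro R hR
      obtain ⟨h1, h2⟩ := hS₀ R hR
      have hR0 : (0:ℝ) < R := lt_of_lt_of_le one_pos h2
      have h1' : Real.log ((S' R).ncard) / R < E + ε := by exact_mod_cast h1
      have := (div_lt_iff₀ hR0).mp h1'
      simpa [hN'def, mul_comm] using this.le
    -- counting inequality : N R ≤ K + N' (a R + C)
    set K : ℝ := N L with hKdef
    have hK1 : (1:ℝ) ≤ K := hN1 L hL
    have hcount : ∀ R : ℝ, 0 ≤ R → N R ≤ K + N' (a * R + C) := by
      intro R hR
      have hsub : S R ⊆ S L ∪ (θ ⁻¹' (S' (a * R + C))) := by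
        intro g hg
        rcases le_or_gt (dist x (g • x)) L with h | h
        · exact Or.inl h
        · refine Or.inr ?_
          have h1 := hcomp g h.le
          have h2 : a * dist x (g • x) + C ≤ a * R + C := by
            have : dist x (g • x) ≤ R := hg
            nlinarith
          exact le_trans h1 h2
      have hRC0 : 0 ≤ a * R + C := by nlinarith
      have hfinU : (S L ∪ θ ⁻¹' (S' (a * R + C))).Finite :=
        (hfin L hL).union ((hfin' _ hRC0).preimage hθ.injOn)
      have h1 : (S R).ncard ≤ (S L ∪ θ ⁻¹' (S' (a * R + C))).ncard :=
        Set.ncard_le_ncard hsub hfinU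
      have h2 : (S L ∪ θ ⁻¹' (S' (a * R + C))).ncard ≤
          (S L).ncard + (θ ⁻¹' (S' (a * R + C))).ncard := Set.ncard_union_le _ _
      have h3 : (θ ⁻¹' (S' (a * R + C))).ncard ≤ (S' (a * R + C)).ncard :=
        Set.ncard_le_ncard_of_injOn θ (fun g hg => hg) hθ.injOn (hfin' _ hRC0)
      have : (S R).ncard ≤ (S L).ncard + (S' (a * R + C)).ncard := by omega
      show ((S R).ncard:ℝ) ≤ ((S L).ncard:ℝ) + ((S' (a * R + C)).ncard:ℝ)
      exact_mod_cast this
    -- eventual bound on log N R / R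
    set bnd : ℝ → ℝ := fun R => Real.log (K + 1) / R + (E + ε) * (a + C / R) with hbnddef
    have hbl : Tendsto bnd atTop (nhds ((E + ε) * a)) := by
      have h1 : Tendsto (fun R : ℝ => Real.log (K + 1) / R) atTop (nhds 0) :=
        tendsto_const_nhds.div_atTop tendsto_id
      have h2 : Tendsto (fun R : ℝ => C / R) atTop (nhds 0) :=
        tendsto_const_nhds.div_atTop tendsto_id
      have := h1.add ((h2.const_add a).const_mul (E + ε))
      simpa [hbnddef] using this
    have hbc : ∀ᶠ R : ℝ in atTop, bnd R < c :=
      hbl.eventually_lt_const (by linarith [hkey])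
    have hmain : ∀ᶠ R : ℝ in atTop, Real.log (N R) / R ≤ bnd R := by
      filter_upwards [eventually_ge_atTop (max 1 S₀)] with R hR
      have hR1 : (1:ℝ) ≤ R := le_trans (le_max_left _ _) hR
      have hR0 : (0:ℝ) < R := lt_of_lt_of_le one_pos hR1
      have hRCge : S₀ ≤ a * R + C := by
        have h1 : S₀ ≤ R := le_trans (le_max_right _ _) hR
        nlinarith
      have hRC0 : 0 ≤ a * R + C := by nlinarith
      have hNpos : (0:ℝ) < N R := lt_of_lt_of_le one_pos (hN1 R hR0.le)
      have hN'pos : (0:ℝ) < N' (a * R + C) := lt_of_lt_of_le one_pos (hN'1 _ hRC0)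
      have step1 : N R ≤ (K + 1) * N' (a * R + C) := by
        have h := hcount R hR0.le
        nlinarith [hN'1 (a * R + C) hRC0]
      have step2 : Real.log (N R) ≤ Real.log (K + 1) + Real.log (N' (a * R + C)) := by
        calc Real.log (N R) ≤ Real.log ((K + 1) * N' (a * R + C)) :=
              Real.log_le_log hNpos step1
          _ = Real.log (K + 1) + Real.log (N' (a * R + C)) :=
              Real.log_mul (by linarith) (ne_of_gt hN'pos)
      have step3 : Real.log (N R) ≤ Real.log (K + 1) + (E + ε) * (a * R + C) :=
        le_trans step2 (by linarith [hlog' (a * R + C) hRCge])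
      have step4 : Real.log (N R) / R ≤
          (Real.log (K + 1) + (E + ε) * (a * R + C)) / R := by
        gcongr
      have heq : (Real.log (K + 1) + (E + ε) * (a * R + C)) / R = bnd R := by
        simp only [hbnddef]
        field_simp
      exact heq ▸ step4
    have hevE : ∀ᶠ R : ℝ in atTop,
        ((Real.log ((S R).ncard) / R : ℝ) : EReal) ≤ (c : EReal) := by
      filter_upwards [hmain, hbc] with R h1 h2
      have h3 : Real.log (N R) / R ≤ c := le_trans h1 h2.le
      exact_mod_cast h3
    exact limsup_le_of_le (by isBoundedDefault) hevE
  -- conclude by density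
  by_contra hlt
  push_neg at hlt
  obtain ⟨c, hc1, hc2⟩ := EReal.exists_between_coe_real hlt
  exact absurd (key c hc1) (not_le.mpr hc2)
end

section
/- Let X and X' be metric spaces, Γ a group acting by isometries on X, Γ' a group acting by isometries on X', and x ∈ X, x' ∈ X' basepoints. Let s₀ > 0 satisfy dist(x, g·x) ≥ s₀ for every g ∈ Γ with g ≠ 1 and dist(x', g'·x') ≥ s₀ for every g' ∈ Γ' with g' ≠ 1. Let ε > 0 with 3ε ≤ s₀ and L > 0 with 3L ≤ 1/ε, and set R := 1/ε. Suppose f : X → X' satisfies f(x) = x' and |dist(f(y₁), f(y₂)) − dist(y₁, y₂)| < ε for all y₁, y₂ ∈ B̄(x,R); φ : Σ̄_R(Γ,x) → Σ̄_R(Γ',x') satisfies dist(f(g·y), φ(g)·f(y)) < ε for every g ∈ Σ̄_R(Γ,x) and y ∈ B̄(x,R) with g·y ∈ B̄(x,R); and ψ : Σ̄_R(Γ',x') → Σ̄_R(Γ,x) satisfies dist(f(ψ(g')·y), g'·f(y)) < ε for every g' ∈ Σ̄_R(Γ',x') and y ∈ B̄(x,R) with ψ(g')·y ∈ B̄(x,R).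 Assume moreover that Σ̄_{L−2ε}(Γ,x) generates Γ, that Σ̄_{L−2ε}(Γ',x') generates Γ', and that the kernels of the canonical epimorphisms F(Σ̄_L(Γ,x)) → Γ and F(Σ̄_L(Γ',x')) → Γ' are normal closures of sets of words of the form s₁·s₂·s₃ with the sᵢ letters from the respective generating sets. Then there exist mutually inverse group isomorphisms φ̃ : Γ → Γ' and ψ̃ : Γ' → Γ such that φ̃(s) = φ(s) for every s ∈ Σ̄_L(Γ,x) and ψ̃(s') = ψ(s') for every s' ∈ Σ̄_L(Γ',x'). -/

private lemma exists_lift {Γ Γ' : Type*} [Group Γ] [Group Γ'] {P : Γ → Prop} (φ : Γ → Γ')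
    {W : Set (FreeGroup {g : Γ // P g})}
    (hclos : Subgroup.closure {g : Γ | P g} = ⊤)
    (hker : (FreeGroup.lift (fun s : {g : Γ // P g} => (s : Γ))).ker = Subgroup.normalClosure W)
    (hW : W ⊆ (FreeGroup.lift (fun s : {g : Γ // P g} => φ (s : Γ))).ker) :
    ∃ Φ : Γ →* Γ', ∀ a, P a → Φ a = φ a := by
  have hrange : Set.range (fun s : {g : Γ // P g} => (s : Γ)) = {g : Γ | P g} :=
    Subtype.range_coe_subtype
  have hsurj : Function.Surjective (FreeGroup.lift (fun s : {g : Γ // P g} => (s : Γ))) := by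
    rw [← MonoidHom.range_eq_top, FreeGroup.range_lift_eq_closure, hrange, hclos]
  have hkerle : (FreeGroup.lift (fun s : {g : Γ // P g} => (s : Γ))).ker ≤
      (FreeGroup.lift (fun s : {g : Γ // P g} => φ (s : Γ))).ker := by
    rw [hker]
    exact Subgroup.normalClosure_le_normal hW
  refine ⟨(FreeGroup.lift (fun s : {g : Γ // P g} => (s : Γ))).liftOfRightInverse
      (Function.surjInv hsurj) (Function.rightInverse_surjInv hsurj)
      ⟨FreeGroup.lift (fun s : {g : Γ // P g} => φ (s : Γ)), hkerle⟩, fun a ha => ?_⟩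
  have key := MonoidHom.liftOfRightInverse_comp_apply
      (FreeGroup.lift (fun s : {g : Γ // P g} => (s : Γ))) (Function.surjInv hsurj)
      (Function.rightInverse_surjInv hsurj)
      ⟨FreeGroup.lift (fun s : {g : Γ // P g} => φ (s : Γ)), hkerle⟩ (FreeGroup.of ⟨a, ha⟩)
  simpa using key

/-- Under the systole bounds `sys ≥ s₀` at both basepoints, `3ε ≤ s₀`,
`3L ≤ 1/ε = R`, an equivariant `ε`-approximation `(f,φ,ψ)` between `(Γ,X,x)` and
`(Γ',X',x')`, generation of `Γ` and `Γ'` by `Σ̄_{L-2ε}` at the basepoints, and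
presentations of `Γ` and `Γ'` over `Σ̄_L` with relators which are words of length `3`,
the maps `φ` and `ψ` induce mutually inverse group isomorphisms `φ̃ : Γ → Γ'` and
`ψ̃ : Γ' → Γ` coinciding with `φ` and `ψ` on `Σ̄_L(Γ,x)` and `Σ̄_L(Γ',x')`. -/
theorem stmt_11 {X X' Γ Γ' : Type*} [MetricSpace X] [MetricSpace X']
    [Group Γ] [Group Γ'] [MulAction Γ X] [IsIsometricSMul Γ X]
    [MulAction Γ' X'] [IsIsometricSMul Γ' X']
    (x : X) (x' : X') (s₀ : ℝ) (hs₀ : 0 < s₀)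
    (hsys : ∀ g : Γ, g ≠ 1 → s₀ ≤ dist x (g • x))
    (hsys' : ∀ g' : Γ', g' ≠ 1 → s₀ ≤ dist x' (g' • x'))
    (ε : ℝ) (hε : 0 < ε) (hεs₀ : 3 * ε ≤ s₀)
    (L : ℝ) (hL : 0 < L) (R : ℝ) (hR : R = 1 / ε) (hLR : 3 * L ≤ R)
    (f : X → X') (φ : Γ → Γ') (ψ : Γ' → Γ)
    (hfx : f x = x')
    (hf : ∀ y₁ ∈ Metric.closedBall x R, ∀ y₂ ∈ Metric.closedBall x R,
      |dist (f y₁) (f y₂) - dist y₁ y₂| < ε)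
    (hφmem : Set.MapsTo φ {g : Γ | dist x (g • x) ≤ R} {g' : Γ' | dist x' (g' • x') ≤ R})
    (hφ : ∀ g ∈ {g : Γ | dist x (g • x) ≤ R}, ∀ y ∈ Metric.closedBall x R,
      g • y ∈ Metric.closedBall x R → dist (f (g • y)) (φ g • f y) < ε)
    (hψmem : Set.MapsTo ψ {g' : Γ' | dist x' (g' • x') ≤ R} {g : Γ | dist x (g • x) ≤ R})
    (hψ : ∀ g' ∈ {g' : Γ' | dist x' (g' • x') ≤ R}, ∀ y ∈ Metric.closedBall x R,
      ψ g' • y ∈ Metric.closedBall x R → dist (f (ψ g' • y)) (g' • f y) < ε)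
    (hgen : Subgroup.closure {g : Γ | dist x (g • x) ≤ L - 2 * ε} = ⊤)
    (hgen' : Subgroup.closure {g' : Γ' | dist x' (g' • x') ≤ L - 2 * ε} = ⊤)
    (hpres : ∃ W : Set (FreeGroup {g : Γ // dist x (g • x) ≤ L}),
      (∀ w ∈ W, ∃ s₁ s₂ s₃ : {g : Γ // dist x (g • x) ≤ L},
        w = FreeGroup.of s₁ * FreeGroup.of s₂ * FreeGroup.of s₃) ∧
      (FreeGroup.lift (fun s : {g : Γ // dist x (g • x) ≤ L} => (s : Γ))).ker =
        Subgroup.normalClosure W)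
    (hpres' : ∃ W' : Set (FreeGroup {g' : Γ' // dist x' (g' • x') ≤ L}),
      (∀ w ∈ W', ∃ s₁ s₂ s₃ : {g' : Γ' // dist x' (g' • x') ≤ L},
        w = FreeGroup.of s₁ * FreeGroup.of s₂ * FreeGroup.of s₃) ∧
      (FreeGroup.lift (fun s : {g' : Γ' // dist x' (g' • x') ≤ L} => (s : Γ'))).ker =
        Subgroup.normalClosure W') :
    ∃ e : Γ ≃* Γ', (∀ s ∈ {g : Γ | dist x (g • x) ≤ L}, e s = φ s) ∧
      (∀ s' ∈ {g' : Γ' | dist x' (g' • x') ≤ L}, e.symm s' = ψ s') := by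
  by_cases hcase : s₀ ≤ L - 2 * ε
  swap
  · -- trivial case: both groups are trivial
    push_neg at hcase
    have htriv : ∀ g : Γ, g = 1 := by
      intro g
      have hg : g ∈ Subgroup.closure {g : Γ | dist x (g • x) ≤ L - 2 * ε} := by
        rw [hgen]; trivial
      refine Subgroup.closure_induction (p := fun g _ => g = 1) ?_ rfl ?_ ?_ hg
      · intro s hs
        by_contra hne
        have h1 := hsys s hne
        have h2 : dist x (s • x) ≤ L - 2 * ε := hs
        linarith
      · intro a b _ _ ha hb; rw [ha, hb, one_mul]
      · intro a _ ha; rw [ha, inv_one]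
    have htriv' : ∀ g' : Γ', g' = 1 := by
      intro g'
      have hg : g' ∈ Subgroup.closure {g' : Γ' | dist x' (g' • x') ≤ L - 2 * ε} := by
        rw [hgen']; trivial
      refine Subgroup.closure_induction (p := fun g _ => g = 1) ?_ rfl ?_ ?_ hg
      · intro s hs
        by_contra hne
        have h1 := hsys' s hne
        have h2 : dist x' (s • x') ≤ L - 2 * ε := hs
        linarith
      · intro a b _ _ ha hb; rw [ha, hb, one_mul]
      · intro a _ ha; rw [ha, inv_one]
    refine ⟨{ toFun := fun _ => 1, invFun := fun _ => 1,
              left_inv := fun g => (htriv g).symm,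
              right_inv := fun g' => (htriv' g').symm,
              map_mul' := fun _ _ => (one_mul 1).symm }, ?_, ?_⟩
    · intro s _; exact (htriv' _).trans (htriv' _).symm
    · intro s' _; exact (htriv _).trans (htriv _).symm
  -- main case
  obtain ⟨W, hW3, hWker⟩ := hpres
  obtain ⟨W', hW3', hWker'⟩ := hpres'
  have hRpos : 0 < R := by rw [hR]; positivity
  have hLR' : L ≤ R := by linarith
  have hxB : x ∈ Metric.closedBall x R := by simp [hRpos.le]
  have hballY : ∀ y : X, dist x y ≤ R → y ∈ Metric.closedBall x R := by
    intro y hy; rwa [Metric.mem_closedBall, dist_comm]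
  have hsep : ∀ a b : Γ, dist (a • x) (b • x) < s₀ → a = b := by
    intro a b hab
    by_contra hne
    have hne' : a⁻¹ * b ≠ 1 := fun h => hne (inv_mul_eq_one.mp h)
    have hge := hsys (a⁻¹ * b) hne'
    rw [show dist x ((a⁻¹ * b) • x) = dist (a • x) (b • x) by
      rw [← dist_smul a x ((a⁻¹ * b) • x), smul_smul, mul_inv_cancel_left]] at hge
    linarith
  have hsep' : ∀ a b : Γ', dist (a • x') (b • x') < s₀ → a = b := by
    intro a b hab
    by_contra hne
    have hne' : a⁻¹ * b ≠ 1 := fun h => hne (inv_mul_eq_one.mp h)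
    have hge := hsys' (a⁻¹ * b) hne'
    rw [show dist x' ((a⁻¹ * b) • x') = dist (a • x') (b • x') by
      rw [← dist_smul a x' ((a⁻¹ * b) • x'), smul_smul, mul_inv_cancel_left]] at hge
    linarith
  -- dist x' (φ g • x') < dist x (g • x) + 2ε
  have hA : ∀ g : Γ, dist x (g • x) ≤ R → dist x' (φ g • x') < dist x (g • x) + 2 * ε := by
    intro g hg
    have h1 := hf x hxB (g • x) (hballY _ hg)
    rw [hfx, abs_sub_lt_iff] at h1
    have h2 := hφ g hg x hxB (hballY _ hg)
    rw [hfx] at h2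
    have ht := dist_triangle x' (f (g • x)) (φ g • x')
    linarith [h1.1]
  have hA' : ∀ g' : Γ', dist x' (g' • x') ≤ R →
      dist x (ψ g' • x) < dist x' (g' • x') + 2 * ε := by
    intro g' hg'
    have hm : dist x (ψ g' • x) ≤ R := hψmem hg'
    have h2 := hψ g' hg' x hxB (hballY _ hm)
    rw [hfx] at h2
    have h1 := hf x hxB (ψ g' • x) (hballY _ hm)
    rw [hfx, abs_sub_lt_iff] at h1
    have ht := dist_triangle x' (g' • x') (f (ψ g' • x))
    have hc : dist (g' • x') (f (ψ g' • x)) = dist (f (ψ g' • x)) (g' • x') := dist_comm _ _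
    linarith [h1.2]
  have hφ1 : φ (1 : Γ) = 1 := by
    apply hsep'
    have h := hA 1 (by simp [hRpos.le])
    simp only [one_smul, dist_self, zero_add] at h
    rw [one_smul, dist_comm]
    linarith
  have hψ1 : ψ (1 : Γ') = 1 := by
    apply hsep
    have h := hA' 1 (by simp [hRpos.le])
    simp only [one_smul, dist_self, zero_add] at h
    rw [one_smul, dist_comm]
    linarith
  -- φ is multiplicative within radius R
  have hD : ∀ g h : Γ, dist x (g • x) ≤ R → dist x (h • x) ≤ R →
      dist x ((g * h) • x) ≤ R → φ (g * h) = φ g * φ h := by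
    intro g h hg hh hgh
    have h1 := hφ (g * h) hgh x hxB (hballY _ hgh)
    rw [hfx, mul_smul] at h1
    have h2 := hφ g hg (h • x) (hballY _ hh) (by rw [← mul_smul]; exact hballY _ hgh)
    have h3 := hφ h hh x hxB (hballY _ hh)
    rw [hfx] at h3
    have h3' : dist (φ g • f (h • x)) ((φ g * φ h) • x') < ε := by
      rw [mul_smul, dist_smul]; exact h3
    apply hsep'
    calc dist (φ (g * h) • x') ((φ g * φ h) • x')
        ≤ dist (φ (g * h) • x') (f (g • h • x)) + dist (f (g • h • x)) (φ g • f (h • x))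
          + dist (φ g • f (h • x)) ((φ g * φ h) • x') := dist_triangle4 _ _ _ _
      _ < ε + ε + ε := by
          rw [dist_comm (φ (g * h) • x')]
          exact add_lt_add (add_lt_add h1 h2) h3'
      _ ≤ s₀ := by linarith
  -- ψ ∘ φ = id on Σ̄_R
  have hC : ∀ g : Γ, dist x (g • x) ≤ R → ψ (φ g) = g := by
    intro g hg
    have hφg : dist x' (φ g • x') ≤ R := hφmem hg
    have hm : dist x (ψ (φ g) • x) ≤ R := hψmem hφg
    have h1 := hψ (φ g) hφg x hxB (hballY _ hm)
    rw [hfx] at h1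
    have h2 := hφ g hg x hxB (hballY _ hg)
    rw [hfx] at h2
    have h3 := hf (ψ (φ g) • x) (hballY _ hm) (g • x) (hballY _ hg)
    rw [abs_sub_lt_iff] at h3
    apply hsep
    have ht := dist_triangle (f (ψ (φ g) • x)) (φ g • x') (f (g • x))
    have hc : dist (φ g • x') (f (g • x)) = dist (f (g • x)) (φ g • x') := dist_comm _ _
    linarith [h3.2]
  -- φ ∘ ψ = id on Σ̄_R
  have hC' : ∀ g' : Γ', dist x' (g' • x') ≤ R → φ (ψ g') = g' := by
    intro g' hg'
    have hm : dist x (ψ g' • x) ≤ R := hψmem hg'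
    have h1 := hφ (ψ g') hm x hxB (hballY _ hm)
    rw [hfx] at h1
    have h2 := hψ g' hg' x hxB (hballY _ hm)
    rw [hfx] at h2
    apply hsep'
    have ht := dist_triangle (φ (ψ g') • x') (f (ψ g' • x)) (g' • x')
    have hc : dist (φ (ψ g') • x') (f (ψ g' • x)) = dist (f (ψ g' • x)) (φ (ψ g') • x') :=
      dist_comm _ _
    linarith
  -- ψ is multiplicative within radius L
  have hD' : ∀ g' h' : Γ', dist x' (g' • x') ≤ L → dist x' (h' • x') ≤ L →
      dist x' ((g' * h') • x') ≤ L → ψ (g' * h') = ψ g' * ψ h' := by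
    intro g' h' hg' hh' hgh'
    have hg'R : dist x' (g' • x') ≤ R := le_trans hg' hLR'
    have hh'R : dist x' (h' • x') ≤ R := le_trans hh' hLR'
    have hgh'R : dist x' ((g' * h') • x') ≤ R := le_trans hgh' hLR'
    have hprod : dist x ((ψ g' * ψ h') • x) ≤ R := by
      rw [mul_smul]
      have t := dist_triangle x (ψ g' • x) (ψ g' • ψ h' • x)
      rw [dist_smul] at t
      have a1 := hA' g' hg'R
      have a2 := hA' h' hh'R
      linarith
    have e2 : φ (ψ g' * ψ h') = g' * h' := by
      rw [hD _ _ (hψmem hg'R) (hψmem hh'R) hprod, hC' g' hg'R, hC' h' hh'R]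
    calc ψ (g' * h') = ψ (φ (ψ g' * ψ h')) := by rw [e2]
      _ = ψ g' * ψ h' := hC _ hprod
  -- construct Φ : Γ →* Γ'
  have hclosL : Subgroup.closure {g : Γ | dist x (g • x) ≤ L} = ⊤ := by
    rw [eq_top_iff, ← hgen]
    exact Subgroup.closure_mono (fun g hg => Set.mem_setOf_eq ▸ (Set.mem_setOf_eq ▸ hg).trans (by linarith : L - 2 * ε ≤ L))
  have hclosL' : Subgroup.closure {g' : Γ' | dist x' (g' • x') ≤ L} = ⊤ := by
    rw [eq_top_iff, ← hgen']
    exact Subgroup.closure_mono (fun g hg => Set.mem_setOf_eq ▸ (Set.mem_setOf_eq ▸ hg).trans (by linarith : L - 2 * ε ≤ L))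
  have hWsub : W ⊆ (FreeGroup.lift
      (fun s : {g : Γ // dist x (g • x) ≤ L} => φ (s : Γ))).ker := by
    intro w hw
    obtain ⟨s₁, s₂, s₃, rfl⟩ := hW3 w hw
    have hm : FreeGroup.of s₁ * FreeGroup.of s₂ * FreeGroup.of s₃ ∈
        (FreeGroup.lift (fun s : {g : Γ // dist x (g • x) ≤ L} => (s : Γ))).ker := by
      rw [hWker]; exact Subgroup.subset_normalClosure hw
    have h1 : (s₁ : Γ) * s₂ * s₃ = 1 := by
      simpa [MonoidHom.mem_ker] using hm
    rw [SetLike.mem_coe, MonoidHom.mem_ker, map_mul, map_mul, FreeGroup.lift_apply_of,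
      FreeGroup.lift_apply_of, FreeGroup.lift_apply_of]
    have h12 : dist x (((s₁ : Γ) * s₂) • x) ≤ R := by
      have hinv : (s₁ : Γ) * s₂ = (s₃ : Γ)⁻¹ := eq_inv_of_mul_eq_one_left h1
      rw [hinv, show dist x ((s₃ : Γ)⁻¹ • x) = dist x ((s₃ : Γ) • x) by
        rw [← dist_smul (s₃ : Γ) x ((s₃ : Γ)⁻¹ • x), smul_inv_smul, dist_comm]]
      exact le_trans s₃.2 hLR'
    have hprod1 : dist x (((s₁ : Γ) * s₂ * s₃) • x) ≤ R := by
      rw [h1, one_smul, dist_self]; exact hRpos.le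
    rw [← hD (s₁ : Γ) (s₂ : Γ) (le_trans s₁.2 hLR') (le_trans s₂.2 hLR') h12,
      ← hD ((s₁ : Γ) * s₂) (s₃ : Γ) h12 (le_trans s₃.2 hLR') hprod1, h1, hφ1]
  have hWsub' : W' ⊆ (FreeGroup.lift
      (fun s : {g' : Γ' // dist x' (g' • x') ≤ L} => ψ (s : Γ'))).ker := by
    intro w hw
    obtain ⟨s₁, s₂, s₃, rfl⟩ := hW3' w hw
    have hm : FreeGroup.of s₁ * FreeGroup.of s₂ * FreeGroup.of s₃ ∈
        (FreeGroup.lift (fun s : {g' : Γ' // dist x' (g' • x') ≤ L} => (s : Γ'))).ker := by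
      rw [hWker']; exact Subgroup.subset_normalClosure hw
    have h1 : (s₁ : Γ') * s₂ * s₃ = 1 := by
      simpa [MonoidHom.mem_ker] using hm
    rw [SetLike.mem_coe, MonoidHom.mem_ker, map_mul, map_mul, FreeGroup.lift_apply_of,
      FreeGroup.lift_apply_of, FreeGroup.lift_apply_of]
    have h12 : dist x' (((s₁ : Γ') * s₂) • x') ≤ L := by
      have hinv : (s₁ : Γ') * s₂ = (s₃ : Γ')⁻¹ := eq_inv_of_mul_eq_one_left h1
      rw [hinv, show dist x' ((s₃ : Γ')⁻¹ • x') = dist x' ((s₃ : Γ') • x') by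
        rw [← dist_smul (s₃ : Γ') x' ((s₃ : Γ')⁻¹ • x'), smul_inv_smul, dist_comm]]
      exact s₃.2
    have hprod1 : dist x' (((s₁ : Γ') * s₂ * s₃) • x') ≤ L := by
      rw [h1, one_smul, dist_self]; exact hL.le
    rw [← hD' (s₁ : Γ') (s₂ : Γ') s₁.2 s₂.2 h12,
      ← hD' ((s₁ : Γ') * s₂) (s₃ : Γ') h12 s₃.2 hprod1, h1, hψ1]
  obtain ⟨Φ, hΦ⟩ := exists_lift (P := fun g : Γ => dist x (g • x) ≤ L) φ hclosL hWker hWsub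
  obtain ⟨Ψ, hΨ⟩ := exists_lift (P := fun g' : Γ' => dist x' (g' • x') ≤ L) ψ hclosL' hWker' hWsub'
  have hcomp1 : ∀ g : Γ, Ψ (Φ g) = g := by
    intro g
    have hg : g ∈ Subgroup.closure {g : Γ | dist x (g • x) ≤ L - 2 * ε} := by
      rw [hgen]; trivial
    refine Subgroup.closure_induction (p := fun g _ => Ψ (Φ g) = g) ?_ (by simp) ?_ ?_ hg
    · intro s hs
      have hs2 : dist x (s • x) ≤ L - 2 * ε := hs
      have hsL : dist x (s • x) ≤ L := by linarith
      rw [hΦ s hsL]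
      have hφsL : dist x' (φ s • x') ≤ L := by
        have := hA s (le_trans hsL hLR')
        linarith
      rw [hΨ _ hφsL]
      exact hC s (le_trans hsL hLR')
    · intro a b _ _ ha hb; rw [map_mul, map_mul, ha, hb]
    · intro a _ ha; rw [map_inv, map_inv, ha]
  have hcomp2 : ∀ g' : Γ', Φ (Ψ g') = g' := by
    intro g'
    have hg : g' ∈ Subgroup.closure {g' : Γ' | dist x' (g' • x') ≤ L - 2 * ε} := by
      rw [hgen']; trivial
    refine Subgroup.closure_induction (p := fun g _ => Φ (Ψ g) = g) ?_ (by simp) ?_ ?_ hg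
    · intro s hs
      have hs2 : dist x' (s • x') ≤ L - 2 * ε := hs
      have hsL : dist x' (s • x') ≤ L := by linarith
      rw [hΨ s hsL]
      have hψsL : dist x (ψ s • x) ≤ L := by
        have := hA' s (le_trans hsL hLR')
        linarith
      rw [hΦ _ hψsL]
      exact hC' s (le_trans hsL hLR')
    · intro a b _ _ ha hb; rw [map_mul, map_mul, ha, hb]
    · intro a _ ha; rw [map_inv, map_inv, ha]
  refine ⟨MonoidHom.toMulEquiv Φ Ψ (by ext g; exact hcomp1 g) (by ext g'; exact hcomp2 g'),
    ?_, ?_⟩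
  · intro s hs; exact hΦ s hs
  · intro s' hs'; exact hΨ s' hs'
end
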